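/- arXiv:2603.27266 — 4 statements merged into one kernel-verified Lean document; each statement's English description precedes it below -/
import Mathlib

section
/- Let r ≥ 1 be an integer. Then for any s ∈ ℝ with s > 1, t_r⋆(s) = ∑_{j=0}^{r} (−1)^{r−j} · 2^{−(r−j)s} · ζ_{r−j}(s) · ζ_j⋆(s). -/
open Finset Filter Topology

namespace MTS

lemma finite_bdd {r N : ℕ} {p : (Fin r → ℕ+) → Prop} :
    {f : {g : Fin r → ℕ+ // p g} | ∀ i, (f.1 i : ℕ) ≤ N}.Finite := by
  have h1 : (Set.univ.pi fun _ : Fin r => Set.Iic N).Finite :=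
    Set.Finite.pi fun _ => Set.finite_Iic N
  have h2 : {f : {g : Fin r → ℕ+ // p g} | ∀ i, (f.1 i : ℕ) ≤ N}
      = (fun (f : {g : Fin r → ℕ+ // p g}) (i : Fin r) => (f.1 i : ℕ)) ⁻¹'
        (Set.univ.pi fun _ => Set.Iic N) := by
    ext f
    simp only [Set.mem_setOf_eq, Set.mem_preimage, Set.mem_pi, Set.mem_univ, Set.mem_Iic,
      forall_true_left]
  rw [h2]
  exact h1.preimage (Set.injOn_of_injective
    (fun f g h => Subtype.ext (funext fun i => PNat.coe_injective (congrFun h i))))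

noncomputable def FA (r N : ℕ) : Finset {f : Fin r → ℕ+ // Antitone f} :=
  (finite_bdd (r := r) (N := N) (p := Antitone)).toFinset
noncomputable def FE (r N : ℕ) : Finset {f : Fin r → ℕ+ // StrictAnti f} :=
  (finite_bdd (r := r) (N := N) (p := StrictAnti)).toFinset

lemma mem_FA {r N : ℕ} {f : {f : Fin r → ℕ+ // Antitone f}} :
    f ∈ FA r N ↔ ∀ i, (f.1 i : ℕ) ≤ N := Set.Finite.mem_toFinset _

lemma mem_FE {r N : ℕ} {f : {f : Fin r → ℕ+ // StrictAnti f}} :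
    f ∈ FE r N ↔ ∀ i, (f.1 i : ℕ) ≤ N := Set.Finite.mem_toFinset _

noncomputable def HS (w : ℕ+ → ℝ) (r N : ℕ) : ℝ := ∑ f ∈ FA r N, ∏ i, w (f.1 i)
noncomputable def ES (w : ℕ+ → ℝ) (r N : ℕ) : ℝ := ∑ f ∈ FE r N, ∏ i, w (f.1 i)

lemma HS_zero (w : ℕ+ → ℝ) (N : ℕ) : HS w 0 N = 1 := by
  have h : FA 0 N = {⟨Fin.elim0, fun i => i.elim0⟩} := by
    ext f
    simp only [mem_FA, Finset.mem_singleton]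
    constructor
    · intro _; exact Subtype.ext (funext fun i => i.elim0)
    · intro _ i; exact i.elim0
  simp [HS, h]

lemma ES_zero (w : ℕ+ → ℝ) (N : ℕ) : ES w 0 N = 1 := by
  have h : FE 0 N = {⟨Fin.elim0, fun i => i.elim0⟩} := by
    ext f
    simp only [mem_FE, Finset.mem_singleton]
    constructor
    · intro _; exact Subtype.ext (funext fun i => i.elim0)
    · intro _ i; exact i.elim0
  simp [ES, h]

lemma HS_N0 (w : ℕ+ → ℝ) (r : ℕ) : HS w (r + 1) 0 = 0 := by
  have h : FA (r + 1) 0 = ∅ :=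
    Finset.eq_empty_of_forall_notMem fun f hf =>
      absurd (mem_FA.mp hf 0) (by simpa using (f.1 0).pos)
  simp [HS, h]

lemma ES_N0 (w : ℕ+ → ℝ) (r : ℕ) : ES w (r + 1) 0 = 0 := by
  have h : FE (r + 1) 0 = ∅ :=
    Finset.eq_empty_of_forall_notMem fun f hf =>
      absurd (mem_FE.mp hf 0) (by simpa using (f.1 0).pos)
  simp [ES, h]

lemma antitone_cons {r : ℕ} {x : ℕ+} {g : Fin r → ℕ+} (hg : Antitone g)
    (hx : ∀ i, g i ≤ x) : Antitone (Fin.cons x g) := by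
  intro i j hij
  rcases Fin.eq_zero_or_eq_succ j with rfl | ⟨j', rfl⟩
  · have : i = 0 := Fin.le_zero_iff.mp hij
    subst this; exact le_refl _
  · rcases Fin.eq_zero_or_eq_succ i with rfl | ⟨i', rfl⟩
    · simpa using hx j'
    · simpa using hg (Fin.succ_le_succ_iff.mp hij)

lemma strictAnti_cons {r : ℕ} {x : ℕ+} {g : Fin r → ℕ+} (hg : StrictAnti g)
    (hx : ∀ i, g i < x) : StrictAnti (Fin.cons x g) := by
  intro i j hij
  rcases Fin.eq_zero_or_eq_succ j with rfl | ⟨j', rfl⟩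
  · exact absurd hij (by simp [Fin.lt_iff_val_lt_val])
  · rcases Fin.eq_zero_or_eq_succ i with rfl | ⟨i', rfl⟩
    · simpa using hx j'
    · simpa using hg (Fin.succ_lt_succ_iff.mp hij)

lemma HS_succ (w : ℕ+ → ℝ) (r N : ℕ) :
    HS w (r + 1) (N + 1) = HS w (r + 1) N + w ⟨N + 1, N.succ_pos⟩ * HS w r (N + 1) := by
  classical
  rw [HS, ← Finset.sum_filter_add_sum_filter_not (FA (r + 1) (N + 1))
    (fun f => (f.1 0 : ℕ) ≤ N)]
  congr 1
  · have h : (FA (r + 1) (N + 1)).filter (fun f => (f.1 0 : ℕ) ≤ N) = FA (r + 1) N := by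
      ext f
      simp only [Finset.mem_filter, mem_FA]
      constructor
      · rintro ⟨-, h0⟩ i
        exact le_trans ((PNat.coe_le_coe _ _).mpr (f.2 (Fin.zero_le i))) h0
      · intro h; exact ⟨fun i => le_trans (h i) (Nat.le_succ N), h 0⟩
    rw [h, HS]
  · rw [HS, Finset.mul_sum]
    refine Finset.sum_bij'
      (fun f _ => (⟨Fin.tail f.1, f.2.comp_monotone Fin.strictMono_succ.monotone⟩ :
        {f : Fin r → ℕ+ // Antitone f}))
      (fun g hg => ⟨Fin.cons ⟨N + 1, N.succ_pos⟩ g.1,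
        antitone_cons g.2 (fun i => (PNat.coe_le_coe _ _).mp (mem_FA.mp hg i))⟩)
      ?_ ?_ ?_ ?_ ?_
    · intro f hf
      rw [mem_FA]
      intro i
      exact mem_FA.mp (Finset.mem_filter.mp hf).1 i.succ
    · intro g hg
      rw [Finset.mem_filter, mem_FA]
      refine ⟨fun i => ?_, by exact Nat.not_le.mpr (Nat.lt_succ_self N)⟩
      rcases Fin.eq_zero_or_eq_succ i with rfl | ⟨i', rfl⟩
      · exact le_refl (N + 1)
      · exact mem_FA.mp hg i'
    · intro f hf
      have h0 : f.1 0 = ⟨N + 1, N.succ_pos⟩ := by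
        have h1 := mem_FA.mp (Finset.mem_filter.mp hf).1 0
        have h2 := (Finset.mem_filter.mp hf).2
        exact PNat.coe_injective (by simpa using by omega)
      apply Subtype.ext
      simp only
      rw [← h0]
      exact Fin.cons_self_tail f.1
    · intro g hg
      apply Subtype.ext
      rfl
    · intro f hf
      have h0 : f.1 0 = ⟨N + 1, N.succ_pos⟩ := by
        have h1 := mem_FA.mp (Finset.mem_filter.mp hf).1 0
        have h2 := (Finset.mem_filter.mp hf).2
        exact PNat.coe_injective (by simpa using by omega)
      rw [Fin.prod_univ_succ, h0]
      rfl

lemma ES_succ (w : ℕ+ → ℝ) (r N : ℕ) :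
    ES w (r + 1) (N + 1) = ES w (r + 1) N + w ⟨N + 1, N.succ_pos⟩ * ES w r N := by
  classical
  rw [ES, ← Finset.sum_filter_add_sum_filter_not (FE (r + 1) (N + 1))
    (fun f => (f.1 0 : ℕ) ≤ N)]
  congr 1
  · have h : (FE (r + 1) (N + 1)).filter (fun f => (f.1 0 : ℕ) ≤ N) = FE (r + 1) N := by
      ext f
      simp only [Finset.mem_filter, mem_FE]
      constructor
      · rintro ⟨-, h0⟩ i
        exact le_trans ((PNat.coe_le_coe _ _).mpr (f.2.antitone (Fin.zero_le i))) h0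
      · intro h; exact ⟨fun i => le_trans (h i) (Nat.le_succ N), h 0⟩
    rw [h, ES]
  · rw [ES, Finset.mul_sum]
    refine Finset.sum_bij'
      (fun f _ => (⟨Fin.tail f.1, f.2.comp_strictMono Fin.strictMono_succ⟩ :
        {f : Fin r → ℕ+ // StrictAnti f}))
      (fun g hg => ⟨Fin.cons ⟨N + 1, N.succ_pos⟩ g.1,
        strictAnti_cons g.2 (fun i => (PNat.coe_lt_coe _ _).mp
          (by simpa using Nat.lt_succ_of_le (mem_FE.mp hg i)))⟩)
      ?_ ?_ ?_ ?_ ?_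
    · intro f hf
      rw [mem_FE]
      intro i
      have h0 : f.1 0 = ⟨N + 1, N.succ_pos⟩ := by
        have h1 := mem_FE.mp (Finset.mem_filter.mp hf).1 0
        have h2 := (Finset.mem_filter.mp hf).2
        exact PNat.coe_injective (by simpa using by omega)
      have hlt : f.1 i.succ < f.1 0 := f.2 (Fin.succ_pos i)
      rw [h0] at hlt
      have h3 : (f.1 i.succ : ℕ) < N + 1 := (PNat.coe_lt_coe _ _).mpr hlt
      show (f.1 i.succ : ℕ) ≤ N
      omega
    · intro g hg
      rw [Finset.mem_filter, mem_FE]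
      refine ⟨fun i => ?_, by exact Nat.not_le.mpr (Nat.lt_succ_self N)⟩
      rcases Fin.eq_zero_or_eq_succ i with rfl | ⟨i', rfl⟩
      · exact le_refl (N + 1)
      · exact le_trans (mem_FE.mp hg i') (Nat.le_succ N)
    · intro f hf
      have h0 : f.1 0 = ⟨N + 1, N.succ_pos⟩ := by
        have h1 := mem_FE.mp (Finset.mem_filter.mp hf).1 0
        have h2 := (Finset.mem_filter.mp hf).2
        exact PNat.coe_injective (by simpa using by omega)
      apply Subtype.ext
      simp only
      rw [← h0]
      exact Fin.cons_self_tail f.1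
    · intro g hg
      apply Subtype.ext
      rfl
    · intro f hf
      have h0 : f.1 0 = ⟨N + 1, N.succ_pos⟩ := by
        have h1 := mem_FE.mp (Finset.mem_filter.mp hf).1 0
        have h2 := (Finset.mem_filter.mp hf).2
        exact PNat.coe_injective (by simpa using by omega)
      rw [Fin.prod_univ_succ, h0]
      rfl

lemma EH_inv (w : ℕ+ → ℝ) (n N : ℕ) :
    ∑ a ∈ Finset.range (n + 1), (-1 : ℝ) ^ a * ES w a N * HS w (n - a) N
      = if n = 0 then 1 else 0 := by
  rcases Nat.eq_zero_or_pos n with rfl | hn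
  · simp [ES_zero, HS_zero]
  rw [if_neg hn.ne']
  induction N with
  | zero =>
    apply Finset.sum_eq_zero
    intro a ha
    rcases Nat.eq_zero_or_pos a with rfl | hapos
    · obtain ⟨m, rfl⟩ : ∃ m, n = m + 1 := ⟨n - 1, by omega⟩
      simp [HS_N0]
    · obtain ⟨b, rfl⟩ : ∃ b, a = b + 1 := ⟨a - 1, by omega⟩
      simp [ES_N0]
  | succ N ih =>
    obtain ⟨n', rfl⟩ : ∃ m, n = m + 1 := ⟨n - 1, by omega⟩
    set w' := w ⟨N + 1, N.succ_pos⟩ with hw'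
    set G : ℕ → ℝ := fun m => ∑ a ∈ Finset.range (m + 1),
      (-1 : ℝ) ^ a * ES w a N * HS w (m - a) (N + 1) with hG
    have claim1 : G (n' + 1)
        = (∑ a ∈ Finset.range (n' + 2), (-1 : ℝ) ^ a * ES w a N * HS w (n' + 1 - a) N)
          + w' * G n' := by
      have key : ∀ a ∈ Finset.range (n' + 1),
          (-1 : ℝ) ^ a * ES w a N * HS w (n' + 1 - a) (N + 1)
          = (-1 : ℝ) ^ a * ES w a N * HS w (n' + 1 - a) N
            + w' * ((-1 : ℝ) ^ a * ES w a N * HS w (n' - a) (N + 1)) := by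
        intro a ha
        rw [Finset.mem_range] at ha
        have h1 : n' + 1 - a = (n' - a) + 1 := by omega
        rw [h1, HS_succ]
        ring
      rw [hG]
      simp only
      rw [Finset.sum_range_succ, Finset.sum_congr rfl key, Finset.sum_add_distrib,
        ← Finset.mul_sum]
      conv_rhs => rw [Finset.sum_range_succ]
      simp only [Nat.sub_self, HS_zero]
      ring
    have claim2 : ∑ a ∈ Finset.range (n' + 2),
          (-1 : ℝ) ^ a * ES w a (N + 1) * HS w (n' + 1 - a) (N + 1)
        = G (n' + 1) - w' * G n' := by
      rw [Finset.sum_range_succ']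
      have key : ∀ i ∈ Finset.range (n' + 1),
          (-1 : ℝ) ^ (i + 1) * ES w (i + 1) (N + 1) * HS w (n' + 1 - (i + 1)) (N + 1)
          = (-1 : ℝ) ^ (i + 1) * ES w (i + 1) N * HS w (n' + 1 - (i + 1)) (N + 1)
            - w' * ((-1 : ℝ) ^ i * ES w i N * HS w (n' - i) (N + 1)) := by
        intro i hi
        rw [ES_succ]
        have h1 : n' + 1 - (i + 1) = n' - i := by omega
        rw [h1]
        ring
      rw [Finset.sum_congr rfl key, Finset.sum_sub_distrib, ← Finset.mul_sum, hG]
      simp only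
      rw [Finset.sum_range_succ'
        (fun a => (-1 : ℝ) ^ a * ES w a N * HS w (n' + 1 - a) (N + 1))]
      rw [ES_zero, ES_zero]
      ring
    rw [claim2, claim1, ih]
    ring

def pmk (N : ℕ) : ℕ+ := ⟨N + 1, N.succ_pos⟩

lemma pnat_odd (a : ℕ+) : ((2 * a - 1 : ℕ+) : ℕ) = 2 * (a : ℕ) - 1 := by
  rw [PNat.sub_coe]
  have h : (1 : ℕ+) < 2 * a := by
    rw [← PNat.coe_lt_coe]
    simp
    have := a.pos
    omega
  rw [if_pos h]
  simp

lemma Psi_rec (w : ℕ+ → ℝ) (r M : ℕ) :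
    ∑ k ∈ Finset.range (r + 2),
        HS (fun n => w (2 * n)) k ((M + 1) / 2)
          * HS (fun n => w (2 * n - 1)) (r + 1 - k) ((M + 2) / 2)
      = ∑ k ∈ Finset.range (r + 2),
          HS (fun n => w (2 * n)) k (M / 2)
            * HS (fun n => w (2 * n - 1)) (r + 1 - k) ((M + 1) / 2)
        + w ⟨M + 1, M.succ_pos⟩ * ∑ k ∈ Finset.range (r + 1),
            HS (fun n => w (2 * n)) k ((M + 1) / 2)
              * HS (fun n => w (2 * n - 1)) (r - k) ((M + 2) / 2) := by
  set we : ℕ+ → ℝ := fun n => w (2 * n) with hwe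
  set wo : ℕ+ → ℝ := fun n => w (2 * n - 1) with hwo
  rcases Nat.even_or_odd M with ⟨N, rfl⟩ | ⟨N, rfl⟩
  · -- M = N + N, even
    have d1 : (N + N + 1) / 2 = N := by omega
    have d2 : (N + N + 2) / 2 = N + 1 := by omega
    have d3 : (N + N) / 2 = N := by omega
    rw [d1, d2, d3]
    have hc : w ⟨N + N + 1, (N + N).succ_pos⟩ = wo ⟨N + 1, N.succ_pos⟩ := by
      rw [hwo]
      show _ = w (2 * pmk N - 1)
      congr 1
      apply PNat.coe_injective
      rw [pnat_odd]
      show N + N + 1 = 2 * (N + 1) - 1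
      omega
    rw [hc]
    have key : ∀ k ∈ Finset.range (r + 1),
        HS we k N * HS wo (r + 1 - k) (N + 1)
        = HS we k N * HS wo (r + 1 - k) N
          + wo ⟨N + 1, N.succ_pos⟩ * (HS we k N * HS wo (r - k) (N + 1)) := by
      intro k hk
      rw [Finset.mem_range] at hk
      have h1 : r + 1 - k = (r - k) + 1 := by omega
      rw [h1, HS_succ]
      ring
    conv_lhs => rw [Finset.sum_range_succ]
    rw [Finset.sum_congr rfl key, Finset.sum_add_distrib, ← Finset.mul_sum]
    conv_rhs => rw [Finset.sum_range_succ]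
    simp only [Nat.sub_self, HS_zero]
    ring
  · -- M = 2 * N + 1, odd
    have d1 : (2 * N + 1 + 1) / 2 = N + 1 := by omega
    have d2 : (2 * N + 1 + 2) / 2 = N + 1 := by omega
    have d3 : (2 * N + 1) / 2 = N := by omega
    rw [d1, d2, d3]
    have hc : w ⟨2 * N + 1 + 1, (2 * N + 1).succ_pos⟩ = we ⟨N + 1, N.succ_pos⟩ := by
      rw [hwe]
      show _ = w (2 * pmk N)
      congr 1
    rw [hc]
    have key : ∀ i ∈ Finset.range (r + 1),
        HS we (i + 1) (N + 1) * HS wo (r + 1 - (i + 1)) (N + 1)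
        = HS we (i + 1) N * HS wo (r + 1 - (i + 1)) (N + 1)
          + we ⟨N + 1, N.succ_pos⟩ * (HS we i (N + 1) * HS wo (r - i) (N + 1)) := by
      intro i hi
      rw [Finset.mem_range] at hi
      have h1 : r + 1 - (i + 1) = r - i := by omega
      rw [HS_succ, h1]
      ring
    conv_lhs => rw [Finset.sum_range_succ']
    rw [Finset.sum_congr rfl key, Finset.sum_add_distrib, ← Finset.mul_sum]
    conv_rhs => rw [Finset.sum_range_succ']
    simp only [HS_zero]
    ring

lemma HS_split (w : ℕ+ → ℝ) (M : ℕ) : ∀ r : ℕ, HS w r M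
    = ∑ k ∈ Finset.range (r + 1),
        HS (fun n => w (2 * n)) k (M / 2) * HS (fun n => w (2 * n - 1)) (r - k) ((M + 1) / 2) := by
  induction M with
  | zero =>
    intro r
    cases r with
    | zero => simp [HS_zero]
    | succ r' =>
      rw [HS_N0]
      symm
      apply Finset.sum_eq_zero
      intro k hk
      rcases Nat.eq_zero_or_pos k with rfl | hkpos
      · have : r' + 1 - 0 = r' + 1 := rfl
        simp [HS_N0]
      · obtain ⟨k', rfl⟩ : ∃ k', k = k' + 1 := ⟨k - 1, by omega⟩
        simp [HS_N0]
  | succ M ihM =>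
    intro r
    induction r with
    | zero => simp [HS_zero]
    | succ r ihr =>
      rw [HS_succ, ihM (r + 1), ihr]
      have := Psi_rec w r M
      have hM2 : M + 1 + 1 = M + 2 := rfl
      rw [hM2] at this ⊢
      linarith [this]

lemma main_finite (w : ℕ+ → ℝ) (r N : ℕ) :
    ∑ j ∈ Finset.range (r + 1),
        (-1 : ℝ) ^ (r - j) * ES (fun n => w (2 * n)) (r - j) N * HS w j (2 * N)
      = HS (fun n => w (2 * n - 1)) r N := by
  set we : ℕ+ → ℝ := fun n => w (2 * n) with hwe
  set wo : ℕ+ → ℝ := fun n => w (2 * n - 1) with hwo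
  have d1 : 2 * N / 2 = N := by omega
  have d2 : (2 * N + 1) / 2 = N := by omega
  have step1 : ∀ j : ℕ, HS w j (2 * N)
      = ∑ m ∈ Finset.range (j + 1), HS we (j - m) N * HS wo m N := by
    intro j
    rw [HS_split w (2 * N) j, d1, d2]
    rw [← Finset.sum_range_reflect (fun k => HS we (j - k) N * HS wo k N) (j + 1)]
    apply Finset.sum_congr rfl
    intro k hk
    rw [Finset.mem_range] at hk
    have h1 : j + 1 - 1 - k = j - k := by omega
    have h2 : j - (j - k) = k := by omega
    rw [h1, h2]
  calc ∑ j ∈ Finset.range (r + 1), (-1 : ℝ) ^ (r - j) * ES we (r - j) N * HS w j (2 * N)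
      = ∑ j ∈ Finset.range (r + 1), ∑ m ∈ Finset.range (j + 1),
          ((-1 : ℝ) ^ (r - j) * ES we (r - j) N * HS we (j - m) N) * HS wo m N := by
        apply Finset.sum_congr rfl
        intro j hj
        rw [step1 j, Finset.mul_sum]
        apply Finset.sum_congr rfl
        intro m hm
        ring
    _ = ∑ m ∈ Finset.range (r + 1), ∑ j ∈ Finset.Icc m r,
          ((-1 : ℝ) ^ (r - j) * ES we (r - j) N * HS we (j - m) N) * HS wo m N := by
        apply Finset.sum_comm'
        intro j m
        simp only [Finset.mem_range, Finset.mem_Icc]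
        omega
    _ = ∑ m ∈ Finset.range (r + 1), (if r - m = 0 then (1:ℝ) else 0) * HS wo m N := by
        apply Finset.sum_congr rfl
        intro m hm
        rw [Finset.mem_range] at hm
        rw [← Finset.sum_mul]
        congr 1
        rw [← EH_inv we (r - m) N]
        refine Finset.sum_nbij' (fun j => r - j) (fun a => r - a) ?_ ?_ ?_ ?_ ?_
        · intro j hj
          rw [Finset.mem_Icc] at hj
          rw [Finset.mem_range]
          omega
        · intro a ha
          rw [Finset.mem_range] at ha
          rw [Finset.mem_Icc]
          omega
        · intro j hj
          rw [Finset.mem_Icc] at hj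
          omega
        · intro a ha
          rw [Finset.mem_range] at ha
          omega
        · intro j hj
          rw [Finset.mem_Icc] at hj
          have h1 : r - m - (r - j) = j - m := by omega
          rw [h1]
    _ = HS wo r N := by
        rw [Finset.sum_eq_single r]
        · simp
        · intro m hm hne
          rw [Finset.mem_range] at hm
          rw [if_neg (by omega)]
          ring
        · intro h
          exact absurd (Finset.self_mem_range_succ r) h

lemma summable_pi (w : ℕ+ → ℝ) (h0 : ∀ n, 0 ≤ w n) (hw : Summable w) (r : ℕ) :
    Summable (fun f : Fin r → ℕ+ => ∏ i, w (f i)) := by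
  induction r with
  | zero =>
    haveI : Unique (Fin 0 → ℕ+) := ⟨⟨fun i => i.elim0⟩, fun f => funext fun i => i.elim0⟩
    exact .of_finite
  | succ r ih =>
    have h := hw.mul_of_nonneg ih h0 (fun f => Finset.prod_nonneg fun i _ => h0 _)
    rw [← (Fin.consEquiv (fun _ : Fin (r + 1) => ℕ+)).summable_iff]
    refine h.congr ?_
    intro p
    simp only [Function.comp_apply]
    rw [Fin.prod_univ_succ]
    simp [Fin.consEquiv_apply]

lemma tendsto_HS (w : ℕ+ → ℝ) (h0 : ∀ n, 0 ≤ w n) (hw : Summable w) (r : ℕ) :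
    Filter.Tendsto (fun N => HS w r N) Filter.atTop
      (nhds (∑' f : {f : Fin r → ℕ+ // Antitone f}, ∏ i, w (f.1 i))) := by
  have hsub : Summable (fun f : {f : Fin r → ℕ+ // Antitone f} => ∏ i, w (f.1 i)) := by
    have h := (summable_pi w h0 hw r).subtype {f : Fin r → ℕ+ | Antitone f}
    exact h.congr fun f => rfl
  have hmono : Monotone (fun N => FA r N) := by
    intro a b hab f hf
    rw [mem_FA] at hf ⊢
    exact fun i => le_trans (hf i) hab
  have hexh : ∀ f : {f : Fin r → ℕ+ // Antitone f}, ∃ N, f ∈ FA r N := by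
    intro f
    refine ⟨Finset.univ.sup (fun i => (f.1 i : ℕ)), ?_⟩
    rw [mem_FA]
    exact fun i => Finset.le_sup (f := fun i => ((f.1 i : ℕ))) (Finset.mem_univ i)
  have ht : Filter.Tendsto
      (fun t : Finset {f : Fin r → ℕ+ // Antitone f} => ∑ f ∈ t, ∏ i, w (f.1 i))
      Filter.atTop (nhds (∑' f : {f : Fin r → ℕ+ // Antitone f}, ∏ i, w (f.1 i))) :=
    hsub.hasSum
  exact ht.comp (Filter.tendsto_atTop_finset_of_monotone hmono hexh)

lemma tendsto_ES (w : ℕ+ → ℝ) (h0 : ∀ n, 0 ≤ w n) (hw : Summable w) (r : ℕ) :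
    Filter.Tendsto (fun N => ES w r N) Filter.atTop
      (nhds (∑' f : {f : Fin r → ℕ+ // StrictAnti f}, ∏ i, w (f.1 i))) := by
  have hsub : Summable (fun f : {f : Fin r → ℕ+ // StrictAnti f} => ∏ i, w (f.1 i)) := by
    have h := (summable_pi w h0 hw r).subtype {f : Fin r → ℕ+ | StrictAnti f}
    exact h.congr fun f => rfl
  have hmono : Monotone (fun N => FE r N) := by
    intro a b hab f hf
    rw [mem_FE] at hf ⊢
    exact fun i => le_trans (hf i) hab
  have hexh : ∀ f : {f : Fin r → ℕ+ // StrictAnti f}, ∃ N, f ∈ FE r N := by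
    intro f
    refine ⟨Finset.univ.sup (fun i => (f.1 i : ℕ)), ?_⟩
    rw [mem_FE]
    exact fun i => Finset.le_sup (f := fun i => ((f.1 i : ℕ))) (Finset.mem_univ i)
  have ht : Filter.Tendsto
      (fun t : Finset {f : Fin r → ℕ+ // StrictAnti f} => ∑ f ∈ t, ∏ i, w (f.1 i))
      Filter.atTop (nhds (∑' f : {f : Fin r → ℕ+ // StrictAnti f}, ∏ i, w (f.1 i))) :=
    hsub.hasSum
  exact ht.comp (Filter.tendsto_atTop_finset_of_monotone hmono hexh)

end MTS


/-- The multiple zeta function at identical arguments: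
`ζ_r(s) = ∑_{n₁ > ⋯ > n_r > 0} (n₁ ⋯ n_r)^{-s}`; by convention `ζ₀(s) = 1`. -/
noncomputable def multZeta (r : ℕ) (s : ℝ) : ℝ :=
  ∑' f : {f : Fin r → ℕ+ // StrictAnti f}, ∏ i, (((f.1 i : ℕ) : ℝ) ^ s)⁻¹

/-- The multiple zeta-star function at identical arguments:
`ζ_r⋆(s) = ∑_{n₁ ≥ ⋯ ≥ n_r ≥ 1} (n₁ ⋯ n_r)^{-s}`; by convention `ζ₀⋆(s) = 1`. -/
noncomputable def multZetaStar (r : ℕ) (s : ℝ) : ℝ :=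
  ∑' f : {f : Fin r → ℕ+ // Antitone f}, ∏ i, (((f.1 i : ℕ) : ℝ) ^ s)⁻¹

/-- The multiple `t`-star function at identical arguments:
`t_r⋆(s) = ∑_{n₁ ≥ ⋯ ≥ n_r ≥ 1} ((2n₁−1)⋯(2n_r−1))^{-s}`. -/
noncomputable def multTStar (r : ℕ) (s : ℝ) : ℝ :=
  ∑' f : {f : Fin r → ℕ+ // Antitone f},
    ∏ i, (((2 * (f.1 i : ℕ) - 1 : ℕ) : ℝ) ^ s)⁻¹

/-- For `r ≥ 1` and real `s > 1`:
`t_r⋆(s) = ∑_{j=0}^{r} (−1)^{r−j} · 2^{−(r−j)s} · ζ_{r−j}(s) · ζ_j⋆(s)`. -/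
theorem multTStar_eq_sum_multZeta_mul_multZetaStar (r : ℕ) (hr : 1 ≤ r) (s : ℝ) (hs : 1 < s) :
    multTStar r s =
      ∑ j ∈ Finset.range (r + 1),
        (-1 : ℝ) ^ (r - j) * ((2 : ℝ) ^ (((r - j : ℕ) : ℝ) * s))⁻¹ *
          multZeta (r - j) s * multZetaStar j s := by
  classical
  set w : ℕ+ → ℝ := fun n => (((n : ℕ) : ℝ) ^ s)⁻¹ with hw
  have h0 : ∀ n : ℕ+, 0 ≤ w n := fun n => inv_nonneg.mpr (Real.rpow_nonneg (Nat.cast_nonneg _) s)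
  have hsum : Summable w := by
    have h1 : Summable (fun n : ℕ => ((n : ℝ) ^ s)⁻¹) := Real.summable_nat_rpow_inv.mpr hs
    exact (h1.comp_injective PNat.coe_injective).congr fun n => rfl
  have h0e : ∀ n : ℕ+, 0 ≤ (fun n : ℕ+ => w (2 * n)) n := fun n => h0 _
  have hsume : Summable (fun n : ℕ+ => w (2 * n)) := by
    refine (hsum.comp_injective ?_).congr fun n => rfl
    intro a b hab
    have h := congrArg (fun x : ℕ+ => (x : ℕ)) hab
    simp only [PNat.mul_coe] at h
    rw [show ((2 : ℕ+) : ℕ) = 2 from rfl] at h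
    exact PNat.coe_injective (by omega)
  have hsumo : Summable (fun n : ℕ+ => w (2 * n - 1)) := by
    refine (hsum.comp_injective ?_).congr fun n => rfl
    intro a b hab
    have h := congrArg (fun x : ℕ+ => (x : ℕ)) hab
    simp only at h
    rw [MTS.pnat_odd, MTS.pnat_odd] at h
    have ha := a.pos
    have hb := b.pos
    exact PNat.coe_injective (by omega)
  have hT := MTS.tendsto_HS (fun n : ℕ+ => w (2 * n - 1)) (fun n => h0 _) hsumo r
  have hZ : ∀ j : ℕ, Filter.Tendsto (fun N => MTS.HS w j (2 * N)) Filter.atTop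
      (nhds (multZetaStar j s)) := by
    intro j
    have h1 := MTS.tendsto_HS w h0 hsum j
    have h2 : Filter.Tendsto (fun N : ℕ => 2 * N) Filter.atTop Filter.atTop :=
      Filter.tendsto_atTop_mono (fun n => Nat.le_mul_of_pos_left n (by norm_num))
        Filter.tendsto_id
    exact h1.comp h2
  have hE : ∀ m : ℕ, Filter.Tendsto (fun N => MTS.ES (fun n : ℕ+ => w (2 * n)) m N)
      Filter.atTop (nhds (((2 : ℝ) ^ ((m : ℝ) * s))⁻¹ * multZeta m s)) := by
    intro m
    have h1 := MTS.tendsto_ES (fun n : ℕ+ => w (2 * n)) h0e hsume m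
    have h2 : (∑' f : {f : Fin m → ℕ+ // StrictAnti f}, ∏ i, w (2 * f.1 i))
        = ((2 : ℝ) ^ ((m : ℝ) * s))⁻¹ * multZeta m s := by
      rw [multZeta, ← tsum_mul_left]
      apply tsum_congr
      intro f
      have h3 : ∀ i : Fin m, w (2 * f.1 i) = ((2 : ℝ) ^ s)⁻¹ * (((f.1 i : ℕ) : ℝ) ^ s)⁻¹ := by
        intro i
        rw [hw]
        simp only
        rw [PNat.mul_coe]
        push_cast
        rw [Real.mul_rpow (by norm_num) (Nat.cast_nonneg _), mul_inv]
      rw [Finset.prod_congr rfl (fun i _ => h3 i), Finset.prod_mul_distrib,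
        Finset.prod_const, Finset.card_univ, Fintype.card_fin]
      congr 1
      rw [mul_comm (m : ℝ) s, Real.rpow_mul (by norm_num : (0:ℝ) ≤ 2), Real.rpow_natCast,
        inv_pow]
    rw [h2] at h1
    exact h1
  have hRHS : Filter.Tendsto (fun N => ∑ j ∈ Finset.range (r + 1),
      (-1 : ℝ) ^ (r - j) * MTS.ES (fun n : ℕ+ => w (2 * n)) (r - j) N * MTS.HS w j (2 * N))
      Filter.atTop
      (nhds (∑ j ∈ Finset.range (r + 1), (-1 : ℝ) ^ (r - j)
        * (((2 : ℝ) ^ (((r - j : ℕ) : ℝ) * s))⁻¹ * multZeta (r - j) s) * multZetaStar j s)) := by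
    apply tendsto_finset_sum
    intro j hj
    exact ((hE (r - j)).const_mul ((-1 : ℝ) ^ (r - j))).mul (hZ j)
  have hfun : (fun N => MTS.HS (fun n : ℕ+ => w (2 * n - 1)) r N)
      = fun N => ∑ j ∈ Finset.range (r + 1),
        (-1 : ℝ) ^ (r - j) * MTS.ES (fun n : ℕ+ => w (2 * n)) (r - j) N * MTS.HS w j (2 * N) :=
    funext fun N => (MTS.main_finite w r N).symm
  rw [hfun] at hT
  have key := tendsto_nhds_unique hT hRHS
  have hTeq : multTStar r s
      = ∑' f : {f : Fin r → ℕ+ // Antitone f}, ∏ i, w (2 * f.1 i - 1) := by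
    rw [multTStar]
    apply tsum_congr
    intro f
    apply Finset.prod_congr rfl
    intro i _
    rw [hw]
    simp only
    congr 2
    exact congrArg (fun k : ℕ => (k : ℝ)) (MTS.pnat_odd _).symm
  rw [hTeq, key]
  apply Finset.sum_congr rfl
  intro j hj
  ring
end

section
/- Let r ≥ 1 be an integer. Then ∑ (1/2)^{c₁+c₂+⋯+c_r} / (1^{c₁} c₁! · 2^{c₂} c₂! ⋯ r^{c_r} c_r!) = (1/4^r)·C(2r, r), where the sum runs over all tuples (c₁,…,c_r) of nonnegative integers satisfying c₁ + 2c₂ + ⋯ + r·c_r = r, and C(2r,r) denotes the central binomial coefficient. Equivalently, the value ζ_r(0) of the meromorphic continuation of the multiple zeta function at identical arguments at s = 0 equals (−1)^r·C(2r,r)/4^r. -/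
open Finset

/-- The (finite) set of all tuples `(c₁, …, c_r)` of nonnegative integers with
`c₁ + 2c₂ + ⋯ + r·c_r = r`. -/
def weightedTuples (r : ℕ) : Finset (Fin r → ℕ) :=
  (Fintype.piFinset fun _ : Fin r => Finset.range (r + 1)).filter
    fun c => ∑ i : Fin r, (i.val + 1) * c i = r

namespace MZAux

variable (r : ℕ)

def w (c : Fin r → ℕ) : ℚ :=
  ((1 : ℚ) / 2) ^ (∑ i, c i) /
    ∏ i : Fin r, ((((i : ℕ) + 1 : ℕ) : ℚ) ^ c i * ((c i).factorial : ℚ))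

def W (n : ℕ) : Finset (Fin r → ℕ) :=
  (Fintype.piFinset fun _ : Fin r => Finset.range (r + 1)).filter
    fun c => ∑ i : Fin r, (i.val + 1) * c i = n

def T (n : ℕ) : ℚ := ∑ c ∈ W r n, w r c

lemma mem_W {n : ℕ} {c : Fin r → ℕ} :
    c ∈ W r n ↔ (∀ i, c i ≤ r) ∧ ∑ i : Fin r, (i.val + 1) * c i = n := by
  simp [W, Fintype.mem_piFinset, Nat.lt_succ_iff]

lemma comp_update {M : Type*} (f : Fin r → ℕ → M) (c : Fin r → ℕ) (i : Fin r) (v : ℕ) :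
    (fun j => f j (Function.update c i v j)) = Function.update (fun j => f j (c j)) i (f i v) := by
  funext j
  rcases eq_or_ne j i with rfl | h
  · simp
  · simp [Function.update_of_ne h]

lemma sum_update {M : Type*} [AddCommMonoid M] (f : Fin r → ℕ → M) (c : Fin r → ℕ)
    (i : Fin r) (v : ℕ) :
    ∑ j : Fin r, f j (Function.update c i v j) = f i v + ∑ j ∈ univ \ {i}, f j (c j) := by
  rw [comp_update, Finset.sum_update_of_mem (mem_univ i)]

lemma sum_eq_add (f : Fin r → ℕ → ℕ) (c : Fin r → ℕ) (i : Fin r) :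
    ∑ j : Fin r, f j (c j) = f i (c i) + ∑ j ∈ univ \ {i}, f j (c j) := by
  have := sum_update r f c i (c i)
  simpa using this

lemma prod_update {M : Type*} [CommMonoid M] (f : Fin r → ℕ → M) (c : Fin r → ℕ)
    (i : Fin r) (v : ℕ) :
    ∏ j : Fin r, f j (Function.update c i v j) = f i v * ∏ j ∈ univ \ {i}, f j (c j) := by
  rw [comp_update, Finset.prod_update_of_mem (mem_univ i)]

lemma prod_eq_mul {M : Type*} [CommMonoid M] (f : Fin r → ℕ → M) (c : Fin r → ℕ) (i : Fin r) :
    ∏ j : Fin r, f j (c j) = f i (c i) * ∏ j ∈ univ \ {i}, f j (c j) := by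
  have := prod_update r f c i (c i)
  simpa using this

lemma key_i {n : ℕ} (hnr : n ≤ r) (i : Fin r) :
    ∑ c ∈ W r n, (((i.1 + 1) * c i : ℕ) : ℚ) * w r c
      = if i.1 + 1 ≤ n then (1 / 2) * T r (n - (i.1 + 1)) else 0 := by
  split_ifs with h
  · rw [← Finset.sum_filter_of_ne (p := fun c => c i ≠ 0)
      (fun c _ hc => fun h0 => by simp [h0] at hc)]
    rw [T, Finset.mul_sum]
    refine Finset.sum_nbij' (fun c => Function.update c i (c i - 1))
      (fun c => Function.update c i (c i + 1)) ?_ ?_ ?_ ?_ ?_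
    · -- dec maps into W (n - (i+1))
      rintro c hc
      rw [Finset.mem_filter] at hc
      obtain ⟨hc, hci⟩ := hc
      rw [mem_W] at hc ⊢
      obtain ⟨hb, hs⟩ := hc
      refine ⟨fun j => ?_, ?_⟩
      · rcases eq_or_ne j i with rfl | hj
        · rw [Function.update_self]; exact le_trans (Nat.sub_le _ _) (hb j)
        · rw [Function.update_of_ne hj]; exact hb j
      · rw [sum_update]
        obtain ⟨k, hk⟩ : ∃ k, c i = k + 1 :=
          ⟨c i - 1, (Nat.succ_pred_eq_of_pos (Nat.pos_of_ne_zero hci)).symm⟩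
        rw [sum_eq_add r (fun j x => (j.1 + 1) * x) c i, hk] at hs
        rw [hk]
        simp only [Nat.add_sub_cancel]
        have e1 : (i.1 + 1) * (k + 1) = (i.1 + 1) * k + (i.1 + 1) := by ring
        rw [e1] at hs
        omega
    · -- inc maps into the filtered set
      rintro c hc
      rw [mem_W] at hc
      obtain ⟨hb, hs⟩ := hc
      rw [Finset.mem_filter, mem_W]
      refine ⟨⟨fun j => ?_, ?_⟩, by simp⟩
      · rcases eq_or_ne j i with rfl | hj
        · rw [Function.update_self]
          have h1 : (j.1 + 1) * c j ≤ n - (j.1 + 1) := by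
            rw [← hs]
            exact Finset.single_le_sum (f := fun k => (k.1 + 1) * c k)
              (fun k _ => Nat.zero_le _) (mem_univ j)
          have h2 : c j + 1 ≤ (j.1 + 1) * (c j + 1) :=
            Nat.le_mul_of_pos_left _ (Nat.succ_pos _)
          have e1 : (j.1 + 1) * (c j + 1) = (j.1 + 1) * c j + (j.1 + 1) := by ring
          omega
        · rw [Function.update_of_ne hj]; exact hb j
      · rw [sum_update]
        rw [sum_eq_add r (fun j x => (j.1 + 1) * x) c i] at hs
        have e1 : (i.1 + 1) * (c i + 1) = (i.1 + 1) * c i + (i.1 + 1) := by ring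
        omega
    · -- left inverse
      rintro c hc
      rw [Finset.mem_filter] at hc
      have hci := hc.2
      funext j
      rcases eq_or_ne j i with rfl | hj
      · simp only [Function.update_self]
        omega
      · simp only [Function.update_of_ne hj]
    · -- right inverse
      rintro c _
      funext j
      rcases eq_or_ne j i with rfl | hj
      · simp only [Function.update_self]
        omega
      · simp only [Function.update_of_ne hj]
    · -- term equality
      rintro c hc
      rw [Finset.mem_filter] at hc
      obtain ⟨hc, hci⟩ := hc
      obtain ⟨k, hk⟩ : ∃ k, c i = k + 1 :=
        ⟨c i - 1, (Nat.succ_pred_eq_of_pos (Nat.pos_of_ne_zero hci)).symm⟩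
      simp only [w]
      rw [sum_update r (fun _ x => x),
        prod_update r (fun j x => ((j.1 + 1 : ℕ) : ℚ) ^ x * (x.factorial : ℚ)),
        sum_eq_add r (fun _ x => x) c i,
        prod_eq_mul r (fun j x => ((j.1 + 1 : ℕ) : ℚ) ^ x * (x.factorial : ℚ)) c i, hk]
      set Sr := ∑ j ∈ univ \ {i}, c j with hSr
      set P := ∏ j ∈ univ \ {i}, ((j.1 + 1 : ℕ) : ℚ) ^ c j * ((c j).factorial : ℚ) with hPdef
      have hP : P ≠ 0 := by
        rw [hPdef]
        apply Finset.prod_ne_zero_iff.mpr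
        intro j _
        positivity
      have ha : ((i.1 + 1 : ℕ) : ℚ) ≠ 0 := by positivity
      have hf : ((k.factorial : ℚ)) ≠ 0 := by positivity
      simp only [Nat.add_sub_cancel, Nat.factorial_succ, pow_succ]
      push_cast
      field_simp
      ring
  · apply Finset.sum_eq_zero
    intro c hc
    rw [mem_W] at hc
    obtain ⟨hb, hs⟩ := hc
    have h1 : (i.1 + 1) * c i ≤ n := by
      rw [← hs]
      exact Finset.single_le_sum (f := fun k => (k.1 + 1) * c k)
        (fun k _ => Nat.zero_le _) (mem_univ i)
    have h0 : c i = 0 := by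
      by_contra h0
      have := Nat.le_mul_of_pos_right (i.1 + 1) (Nat.pos_of_ne_zero h0)
      omega
    simp [h0]

lemma recurrence {n : ℕ} (hn1 : 1 ≤ n) (hnr : n ≤ r) :
    (n : ℚ) * T r n = (1 / 2) * ∑ j ∈ range n, T r j := by
  have step1 : (n : ℚ) * T r n
      = ∑ i : Fin r, ∑ c ∈ W r n, (((i.1 + 1) * c i : ℕ) : ℚ) * w r c := by
    rw [T, Finset.mul_sum, Finset.sum_comm]
    apply Finset.sum_congr rfl
    intro c hc
    rw [mem_W] at hc
    rw [← Finset.sum_mul, ← Nat.cast_sum, hc.2]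
  rw [step1, Finset.sum_congr rfl (fun i _ => key_i r hnr i),
    Fin.sum_univ_eq_sum_range (fun k => if k + 1 ≤ n then (1 / 2) * T r (n - (k + 1)) else 0) r]
  have e0 : (∑ k ∈ range r, if k + 1 ≤ n then (1 / 2 : ℚ) * T r (n - (k + 1)) else 0)
      = ∑ k ∈ range n, if k + 1 ≤ n then (1 / 2 : ℚ) * T r (n - (k + 1)) else 0 :=
    (Finset.sum_subset (Finset.range_subset_range.mpr hnr) (fun k _ hk => by
      rw [Finset.mem_range, not_lt] at hk
      rw [if_neg (by omega)])).symm
  have e1 : (∑ k ∈ range n, if k + 1 ≤ n then (1 / 2 : ℚ) * T r (n - (k + 1)) else 0)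
      = ∑ k ∈ range n, (1 / 2 : ℚ) * T r (n - 1 - k) :=
    Finset.sum_congr rfl (fun k hk => by
      rw [Finset.mem_range] at hk
      rw [if_pos (by omega)]
      congr 2
      omega)
  rw [e0, e1, Finset.sum_range_reflect (fun j => (1 / 2 : ℚ) * T r j) n, ← Finset.mul_sum]


def b (n : ℕ) : ℚ := ((2 * n).choose n : ℚ) / 4 ^ n

lemma b_succ (n : ℕ) : (2 * n + 2) * b (n + 1) = (2 * n + 1) * b n := by
  have h := Nat.succ_mul_centralBinom_succ n
  have h1 : ((n + 1) * Nat.centralBinom (n + 1) : ℚ)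
      = (2 * (2 * n + 1) * Nat.centralBinom n : ℚ) := by
    exact_mod_cast congrArg (Nat.cast : ℕ → ℚ) h
  have key : ((2 * n + 2 : ℚ)) * (Nat.centralBinom (n + 1) : ℚ)
      = 4 * (2 * n + 1) * (Nat.centralBinom n : ℚ) := by linear_combination 2 * h1
  have h4 : ((4 : ℚ) ^ n) ≠ 0 := by positivity
  simp only [b, ← Nat.centralBinom_eq_two_mul_choose, pow_succ]
  field_simp
  linear_combination key

lemma sum_b (n : ℕ) : ∑ j ∈ range n, b j = 2 * n * b n := by
  induction n with
  | zero => simp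
  | succ n ih =>
    rw [Finset.sum_range_succ, ih]
    have := b_succ n
    push_cast
    linarith

lemma T_zero : T r 0 = 1 := by
  have hW : W r 0 = {fun _ => 0} := by
    ext c
    simp only [mem_W, Finset.mem_singleton]
    constructor
    · rintro ⟨-, h⟩
      funext i
      have := Finset.sum_eq_zero_iff.mp h i (mem_univ i)
      simpa using this
    · rintro rfl
      simp
  rw [T, hW, Finset.sum_singleton, w]
  simp

lemma T_eq_b : ∀ n, n ≤ r → T r n = b n := by
  intro n
  induction n using Nat.strong_induction_on with
  | _ n ih =>
    intro hnr
    rcases Nat.eq_zero_or_pos n with rfl | hn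
    · simpa [b] using T_zero r
    · have hrec := recurrence r hn hnr
      have hs : ∑ j ∈ range n, T r j = ∑ j ∈ range n, b j :=
        Finset.sum_congr rfl fun j hj =>
          ih j (Finset.mem_range.mp hj) (le_trans (le_of_lt (Finset.mem_range.mp hj)) hnr)
      rw [hs, sum_b] at hrec
      have hn' : (0 : ℚ) < n := by exact_mod_cast hn
      have h2 : (2 * (n : ℚ)) ≠ 0 := by positivity
      refine mul_left_cancel₀ h2 ?_
      linarith [hrec]

end MZAux

/-- For `r ≥ 1`:
`∑_{c₁+2c₂+⋯+rc_r=r} (1/2)^{c₁+⋯+c_r}/(1^{c₁}c₁!⋯r^{c_r}c_r!) = C(2r,r)/4^r`.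
Equivalently (substituting the continued value `ζ(0) = −1/2` for every factor `ζ(i·0)`
in the explicit formula for `ζ_r(s)`), the meromorphically continued value `ζ_r(0)`
equals `(−1)^r C(2r,r)/4^r`. -/
theorem multZeta_at_zero (r : ℕ) (hr : 1 ≤ r) :
    (∑ c ∈ weightedTuples r,
        ((1 : ℚ) / 2) ^ (∑ i, c i) /
          (∏ i : Fin r, ((((i : ℕ) + 1 : ℕ) : ℚ) ^ c i * ((c i).factorial : ℚ)))
      = ((2 * r).choose r : ℚ) / 4 ^ r) ∧
    (∑ c ∈ weightedTuples r,
        (-1 : ℂ) ^ (r + ∑ i, c i) /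
          (∏ i : Fin r, ((((i : ℕ) + 1 : ℕ) : ℂ) ^ c i * ((c i).factorial : ℂ))) *
        ∏ i : Fin r, riemannZeta ((((i : ℕ) + 1 : ℕ) : ℂ) * 0) ^ c i
      = (-1 : ℂ) ^ r * ((2 * r).choose r : ℂ) / 4 ^ r) := by
  have hmain : (∑ c ∈ weightedTuples r,
      ((1 : ℚ) / 2) ^ (∑ i, c i) /
        (∏ i : Fin r, ((((i : ℕ) + 1 : ℕ) : ℚ) ^ c i * ((c i).factorial : ℚ)))
    = ((2 * r).choose r : ℚ) / 4 ^ r) := by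
    have := MZAux.T_eq_b r r le_rfl
    simpa [MZAux.T, MZAux.W, MZAux.w, MZAux.b, weightedTuples] using this
  refine ⟨hmain, ?_⟩
  have hC : (∑ c ∈ weightedTuples r,
      ((1 : ℂ) / 2) ^ (∑ i, c i) /
        (∏ i : Fin r, ((((i : ℕ) + 1 : ℕ) : ℂ) ^ c i * ((c i).factorial : ℂ)))
    = ((2 * r).choose r : ℂ) / 4 ^ r) := by
    have h := congrArg (fun q : ℚ => (q : ℂ)) hmain
    push_cast at h
    convert h using 2 <;> norm_num
  calc ∑ c ∈ weightedTuples r,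
        (-1 : ℂ) ^ (r + ∑ i, c i) /
          (∏ i : Fin r, ((((i : ℕ) + 1 : ℕ) : ℂ) ^ c i * ((c i).factorial : ℂ))) *
        ∏ i : Fin r, riemannZeta ((((i : ℕ) + 1 : ℕ) : ℂ) * 0) ^ c i
      = ∑ c ∈ weightedTuples r, (-1 : ℂ) ^ r *
          (((1 : ℂ) / 2) ^ (∑ i, c i) /
            (∏ i : Fin r, ((((i : ℕ) + 1 : ℕ) : ℂ) ^ c i * ((c i).factorial : ℂ)))) := by
        apply Finset.sum_congr rfl
        intro c _
        have hz : ∏ i : Fin r, riemannZeta ((((i : ℕ) + 1 : ℕ) : ℂ) * 0) ^ c i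
            = ((-1 : ℂ) / 2) ^ (∑ i, c i) := by
          rw [Finset.prod_congr rfl (fun i _ => by rw [mul_zero, riemannZeta_zero]),
            Finset.prod_pow_eq_pow_sum]
        rw [hz]
        have hneg : ((-1 : ℂ) / 2) ^ (∑ i, c i)
            = (-1 : ℂ) ^ (∑ i, c i) * ((1 : ℂ) / 2) ^ (∑ i, c i) := by
          rw [← mul_pow]; norm_num
        rw [hneg]
        have hpow : (-1 : ℂ) ^ (r + ∑ i, c i) * (-1 : ℂ) ^ (∑ i, c i) = (-1 : ℂ) ^ r := by
          rw [← pow_add, add_assoc, pow_add]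
          have : Even ((∑ i, c i) + (∑ i, c i)) := ⟨∑ i, c i, rfl⟩
          rw [this.neg_one_pow, mul_one]
        linear_combination (((1 : ℂ) / 2) ^ (∑ i, c i) /
          (∏ i : Fin r, ((((i : ℕ) + 1 : ℕ) : ℂ) ^ c i * ((c i).factorial : ℂ)))) * hpow
    _ = (-1 : ℂ) ^ r * ((2 * r).choose r : ℂ) / 4 ^ r := by
        rw [← Finset.mul_sum, hC, mul_div_assoc]
end

section
/- Let r ≥ 1 be an integer. Then ∑ (−1/2)^{c₁+c₂+⋯+c_r} / (1^{c₁} c₁! · 2^{c₂} c₂! ⋯ r^{c_r} c_r!) = −(1/(r·2^{2r−1}))·C(2r−2, r−1), where the sum runs over all tuples (c₁,…,c_r) of nonnegative integers satisfying c₁ + 2c₂ + ⋯ + r·c_r = r, and C(2r−2,r−1) denotes a binomial coefficient. Equivalently, the value ζ_r⋆(0) of the meromorphic continuation of the multiple zeta-star function at identical arguments at s = 0 equals −C(2r−2,r−1)/(r·2^{2r−1}). -/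
section Aux

def WT (n r : ℕ) : Finset (Fin n → ℕ) :=
  (Fintype.piFinset fun _ : Fin n => Finset.range (r + 1)).filter
    fun c => ∑ i : Fin n, (i.val + 1) * c i = r

lemma mem_WT {n r : ℕ} {c : Fin n → ℕ} : c ∈ WT n r ↔ ∑ i : Fin n, (i.val + 1) * c i = r := by
  constructor
  · intro h; exact (Finset.mem_filter.mp h).2
  · intro h
    refine Finset.mem_filter.mpr ⟨Fintype.mem_piFinset.mpr fun i => ?_, h⟩
    rw [Finset.mem_range]
    have h1 : c i ≤ (i.val + 1) * c i := Nat.le_mul_of_pos_left _ (Nat.succ_pos _)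
    have h2 : (i.val + 1) * c i ≤ r := h ▸ Finset.single_le_sum (f := fun i => (i.val + 1) * c i)
      (fun _ _ => Nat.zero_le _) (Finset.mem_univ i)
    omega

def g (i k : ℕ) : ℚ := (-(1:ℚ)/2) ^ k / ((i + 1 : ℕ) ^ k * k.factorial)

lemma g_zero (i : ℕ) : g i 0 = 1 := by simp [g]

lemma g_succ (i k : ℕ) : ((i : ℚ) + 1) * (k + 1) * g i (k + 1) = (-(1:ℚ)/2) * g i k := by
  have h1 : ((i : ℚ) + 1) ≠ 0 := by positivity
  have h2 : (k.factorial : ℚ) ≠ 0 := Nat.cast_ne_zero.mpr k.factorial_ne_zero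
  have h3 : ((k : ℚ) + 1) ≠ 0 := by positivity
  simp only [g, Nat.factorial_succ, pow_succ]
  push_cast
  field_simp

noncomputable def S (n r : ℕ) : ℚ := ∑ c ∈ WT n r, ∏ i : Fin n, g i.val (c i)

lemma WT_forced_zero {n r : ℕ} {c : Fin n → ℕ} (hc : c ∈ WT n r) (i : Fin n)
    (hi : r ≤ i.val) : c i = 0 := by
  have h2 : (i.val + 1) * c i ≤ r := (mem_WT.mp hc) ▸ Finset.single_le_sum
    (f := fun i => (i.val + 1) * c i) (fun _ _ => Nat.zero_le _) (Finset.mem_univ i)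
  by_contra h
  have : i.val + 1 ≤ (i.val + 1) * c i := Nat.le_mul_of_pos_right _ (Nat.pos_of_ne_zero h)
  omega

lemma S_step (n r : ℕ) (h : r ≤ n) : S (n + 1) r = S n r := by
  unfold S
  refine Finset.sum_bij' (fun c _ => c ∘ Fin.castSucc) (fun c _ => Fin.snoc c 0) ?_ ?_ ?_ ?_ ?_
  · intro c hc
    rw [mem_WT]
    have := mem_WT.mp hc
    rw [Fin.sum_univ_castSucc] at this
    have hz : c (Fin.last n) = 0 := WT_forced_zero hc (Fin.last n) (by simpa using h)
    simpa [hz] using this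
  · intro c hc
    rw [mem_WT]
    have := mem_WT.mp hc
    rw [Fin.sum_univ_castSucc]
    simpa [Fin.snoc_castSucc, Fin.snoc_last]
  · intro c hc
    funext j
    refine Fin.lastCases ?_ ?_ j
    · simp only [Fin.snoc_last]
      exact (WT_forced_zero hc (Fin.last n) (by simpa using h)).symm
    · intro i
      simp only [Fin.snoc_castSucc]
      rfl
  · intro c hc
    funext j
    simp [Fin.snoc_castSucc]
  · intro c hc
    rw [Fin.prod_univ_castSucc]
    have hz : c (Fin.last n) = 0 := WT_forced_zero hc (Fin.last n) (by simpa using h)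
    simp [hz, g_zero]

lemma S_stable (n r : ℕ) (h : r ≤ n) : S n r = S r r := by
  obtain ⟨k, rfl⟩ := Nat.exists_eq_add_of_le h
  induction k with
  | zero => rfl
  | succ k ih =>
    rw [← Nat.add_assoc, S_step (r + k) r (Nat.le_add_right _ _), ih (Nat.le_add_right _ _)]

lemma upd_sum {M : Type*} [AddCommMonoid M] {n : ℕ} (F : Fin n → ℕ → M) (c : Fin n → ℕ)
    (i : Fin n) (b : ℕ) :
    ∑ j, F j (Function.update c i b j) = F i b + ∑ j ∈ Finset.univ.erase i, F j (c j) := by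
  rw [← Finset.add_sum_erase _ _ (Finset.mem_univ i)]
  congr 1
  · rw [Function.update_self]
  · exact Finset.sum_congr rfl fun j hj => by
      rw [Function.update_of_ne (Finset.ne_of_mem_erase hj)]

lemma upd_prod {M : Type*} [CommMonoid M] {n : ℕ} (F : Fin n → ℕ → M) (c : Fin n → ℕ)
    (i : Fin n) (b : ℕ) :
    ∏ j, F j (Function.update c i b j) = F i b * ∏ j ∈ Finset.univ.erase i, F j (c j) := by
  rw [← Finset.mul_prod_erase _ _ (Finset.mem_univ i)]
  congr 1
  · rw [Function.update_self]
  · exact Finset.prod_congr rfl fun j hj => by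
      rw [Function.update_of_ne (Finset.ne_of_mem_erase hj)]

lemma plain_sum {M : Type*} [AddCommMonoid M] {n : ℕ} (F : Fin n → ℕ → M) (c : Fin n → ℕ)
    (i : Fin n) :
    ∑ j, F j (c j) = F i (c i) + ∑ j ∈ Finset.univ.erase i, F j (c j) :=
  (Finset.add_sum_erase _ _ (Finset.mem_univ i)).symm

lemma plain_prod {M : Type*} [CommMonoid M] {n : ℕ} (F : Fin n → ℕ → M) (c : Fin n → ℕ)
    (i : Fin n) :
    ∏ j, F j (c j) = F i (c i) * ∏ j ∈ Finset.univ.erase i, F j (c j) :=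
  (Finset.mul_prod_erase _ _ (Finset.mem_univ i)).symm

lemma S_rec (r : ℕ) :
    (r : ℚ) * S r r = ∑ i : Fin r, (-(1:ℚ)/2) * S r (r - (i.val + 1)) := by
  have key : ∀ i : Fin r,
      (∑ c ∈ WT r r, (((i.val + 1) * c i : ℕ) : ℚ) * ∏ j : Fin r, g j.val (c j))
        = (-(1:ℚ)/2) * S r (r - (i.val + 1)) := by
    intro i
    rw [S, Finset.mul_sum]
    rw [← Finset.sum_filter_add_sum_filter_not (WT r r) (fun c => c i ≠ 0)]
    have h0 : ∑ c ∈ (WT r r).filter (fun c => ¬ c i ≠ 0),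
        (((i.val + 1) * c i : ℕ) : ℚ) * ∏ j, g j.val (c j) = 0 := by
      apply Finset.sum_eq_zero
      intro c hc
      have : c i = 0 := by simpa using (Finset.mem_filter.mp hc).2
      simp [this]
    rw [h0, add_zero]
    refine Finset.sum_bij' (fun c _ => Function.update c i (c i - 1))
      (fun c _ => Function.update c i (c i + 1)) ?_ ?_ ?_ ?_ ?_
    · intro c hc
      obtain ⟨hc1, hc2⟩ := Finset.mem_filter.mp hc
      have hne : c i ≠ 0 := by simpa using hc2
      obtain ⟨k, hk⟩ : ∃ k, c i = k + 1 := ⟨c i - 1, by omega⟩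
      rw [mem_WT]
      rw [upd_sum (fun j k => (j.val + 1) * k)]
      have hsum := mem_WT.mp hc1
      rw [plain_sum (fun j k => (j.val + 1) * k) c i] at hsum
      simp only [hk, Nat.add_sub_cancel] at hsum ⊢
      have e1 : (i.val + 1) * (k + 1) = (i.val + 1) * k + (i.val + 1) := by ring
      omega
    · intro c hc
      have hsum := mem_WT.mp hc
      have hi : i.val + 1 ≤ r := i.isLt
      refine Finset.mem_filter.mpr ⟨?_, ?_⟩
      · rw [mem_WT]
        rw [upd_sum (fun j k => (j.val + 1) * k)]
        rw [plain_sum (fun j k => (j.val + 1) * k) c i] at hsum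
        have e1 : (i.val + 1) * (c i + 1) = (i.val + 1) * (c i) + (i.val + 1) := by ring
        omega
      · simp
    · intro c hc
      have hne : c i ≠ 0 := by simpa using (Finset.mem_filter.mp hc).2
      simp only [Function.update_self, Function.update_idem]
      rw [show c i - 1 + 1 = c i by omega, Function.update_eq_self]
    · intro c hc
      simp only [Function.update_self, Function.update_idem, Nat.add_sub_cancel,
        Function.update_eq_self]
    · intro c hc
      obtain ⟨hc1, hc2⟩ := Finset.mem_filter.mp hc
      have hne : c i ≠ 0 := by simpa using hc2
      obtain ⟨k, hk⟩ : ∃ k, c i = k + 1 := ⟨c i - 1, by omega⟩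
      rw [upd_prod (fun j k => g j.val k), plain_prod (fun j k => g j.val k) c i]
      simp only [hk, Nat.add_sub_cancel]
      have hg := g_succ i.val k
      have hc' : (((i.val + 1) * (k + 1) : ℕ) : ℚ) = ((i.val : ℚ) + 1) * ((k : ℚ) + 1) := by
        push_cast; ring
      rw [hc']
      rw [← mul_assoc, ← mul_assoc, hg]
  calc (r : ℚ) * S r r
      = ∑ c ∈ WT r r, ∑ i : Fin r, (((i.val + 1) * c i : ℕ) : ℚ) * ∏ j, g j.val (c j) := by
        rw [S, Finset.mul_sum]
        refine Finset.sum_congr rfl fun c hc => ?_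
        rw [← Finset.sum_mul, ← Nat.cast_sum, mem_WT.mp hc]
    _ = ∑ i : Fin r, ∑ c ∈ WT r r, (((i.val + 1) * c i : ℕ) : ℚ) * ∏ j, g j.val (c j) :=
        Finset.sum_comm
    _ = _ := Finset.sum_congr rfl fun i _ => key i

lemma S_zero : S 0 0 = 1 := by
  rw [S]
  rw [show WT 0 0 = {fun i : Fin 0 => 0} from by decide]
  simp

noncomputable def A : ℕ → ℚ := fun j =>
  if j = 0 then 1 else -(((2 * j - 2).choose (j - 1) : ℚ) / ((j : ℚ) * 2 ^ (2 * j - 1)))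

lemma choose_key (r : ℕ) :
    (((2 * r + 2).choose (r + 1) : ℚ)) * (((r : ℚ) + 1) * ((r : ℚ) + 1))
      = (2 * (r : ℚ) + 2) * ((2 * (r : ℚ) + 1) * (((2 * r).choose r : ℚ))) := by
  have h1 := Nat.add_one_mul_choose_eq (2 * r + 1) r
  have h2 := Nat.add_one_mul_choose_eq (2 * r) r
  have h3 : (2 * r + 1).choose r = (2 * r + 1).choose (r + 1) :=
    (Nat.choose_symm_half r).symm
  rw [h3] at h1
  have h1' : ((2 * r + 2 : ℕ) : ℚ) * (((2 * r + 1).choose (r + 1) : ℕ) : ℚ)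
      = (((2 * r + 2).choose (r + 1) : ℕ) : ℚ) * ((r : ℚ) + 1) := by
    exact_mod_cast congrArg (Nat.cast (R := ℚ)) h1
  have h2' : ((2 * r + 1 : ℕ) : ℚ) * (((2 * r).choose r : ℕ) : ℚ)
      = (((2 * r + 1).choose (r + 1) : ℕ) : ℚ) * ((r : ℚ) + 1) := by
    exact_mod_cast congrArg (Nat.cast (R := ℚ)) h2
  push_cast at h1' h2'
  nlinarith [h1', h2']

lemma psum (r : ℕ) : ∑ j ∈ Finset.range (r + 1), A j = (((2 * r).choose r : ℚ)) / 4 ^ r := by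
  induction r with
  | zero => simp [A]
  | succ r ih =>
    rw [Finset.sum_range_succ, ih]
    have hA : A (r + 1) = -(((2 * r).choose r : ℚ) / (((r : ℚ) + 1) * 2 ^ (2 * r + 1))) := by
      show (if r + 1 = 0 then (1:ℚ) else _) = _
      rw [if_neg (Nat.succ_ne_zero r)]
      rw [show 2 * (r + 1) - 2 = 2 * r by omega, show r + 1 - 1 = r by omega,
        show 2 * (r + 1) - 1 = 2 * r + 1 by omega]
      push_cast
      ring
    rw [hA, show 2 * (r + 1) = 2 * r + 2 by omega]
    have key := choose_key r
    have hr1 : ((r : ℚ) + 1) ≠ 0 := by positivity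
    have h4 : (4 : ℚ) ^ r ≠ 0 := by positivity
    have h2 : (2 : ℚ) ^ (2 * r + 1) ≠ 0 := by positivity
    have h44 : (4 : ℚ) ^ (r + 1) = 4 * 4 ^ r := by ring
    have h24 : (2 : ℚ) ^ (2 * r + 1) = 2 * 4 ^ r := by
      rw [pow_succ, pow_mul]; norm_num; ring
    rw [h44, h24]
    have key' : (((2 * r + 2).choose (r + 1) : ℚ)) * ((r : ℚ) + 1)
        = (4 * (r : ℚ) + 2) * (((2 * r).choose r : ℚ)) := by
      refine mul_right_cancel₀ hr1 ?_
      linear_combination key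
    field_simp
    linear_combination (-2 : ℚ) * key'

lemma S_eq (r : ℕ) : S r r = A r := by
  induction r using Nat.strong_induction_on with
  | _ r ih =>
    match r with
    | 0 => rw [S_zero, A]; simp
    | (m + 1) =>
      have hrec := S_rec (m + 1)
      have hstab : ∀ i : Fin (m + 1), S (m + 1) (m + 1 - (i.val + 1)) =
          S (m + 1 - (i.val + 1)) (m + 1 - (i.val + 1)) :=
        fun i => S_stable _ _ (by omega)
      simp only [hstab] at hrec
      have hsum : ∑ i : Fin (m + 1), (-(1:ℚ)/2) * S (m + 1 - (i.val + 1)) (m + 1 - (i.val + 1))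
          = (-(1:ℚ)/2) * ∑ j ∈ Finset.range (m + 1), A j := by
        rw [Fin.sum_univ_eq_sum_range
          (fun j => (-(1:ℚ)/2) * S (m + 1 - (j + 1)) (m + 1 - (j + 1))) (m + 1), ← Finset.mul_sum]
        congr 1
        have hco : ∀ j ∈ Finset.range (m + 1),
            S (m + 1 - (j + 1)) (m + 1 - (j + 1)) = A (m + 1 - 1 - j) := by
          intro j hj
          rw [ih _ (by omega)]
          congr 1
          omega
        rw [Finset.sum_congr rfl hco, Finset.sum_range_reflect A (m + 1)]
      rw [hsum, psum] at hrec
      have hm1 : ((m : ℚ) + 1) ≠ 0 := by positivity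
      have hA : A (m + 1) = -(((2 * m).choose m : ℚ) / (((m : ℚ) + 1) * 2 ^ (2 * m + 1))) := by
        show (if m + 1 = 0 then (1:ℚ) else _) = _
        rw [if_neg (Nat.succ_ne_zero m)]
        rw [show 2 * (m + 1) - 2 = 2 * m by omega, show m + 1 - 1 = m by omega,
          show 2 * (m + 1) - 1 = 2 * m + 1 by omega]
        push_cast
        ring
      rw [hA]
      have h24 : (2 : ℚ) ^ (2 * m + 1) = 2 * 4 ^ m := by
        rw [pow_succ, pow_mul]; norm_num; ring
      have h4 : (4 : ℚ) ^ m ≠ 0 := by positivity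
      have hcast : ((m : ℚ) + 1) = ((m + 1 : ℕ) : ℚ) := by push_cast; ring
      rw [h24]
      rw [← hcast] at hrec
      field_simp at hrec ⊢
      linarith [hrec]

theorem multZetaStar_at_zero' (r : ℕ) (hr : 1 ≤ r) :
    (∑ c ∈ WT r r,
        (-(1 : ℚ) / 2) ^ (∑ i, c i) /
          (∏ i : Fin r, ((((i : ℕ) + 1 : ℕ) : ℚ) ^ c i * ((c i).factorial : ℚ)))
      = -(((2 * r - 2).choose (r - 1) : ℚ) / ((r : ℚ) * 2 ^ (2 * r - 1)))) ∧
    (∑ c ∈ WT r r,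
        1 / (∏ i : Fin r, ((((i : ℕ) + 1 : ℕ) : ℂ) ^ c i * ((c i).factorial : ℂ))) *
        ∏ i : Fin r, riemannZeta ((((i : ℕ) + 1 : ℕ) : ℂ) * 0) ^ c i
      = -(((2 * r - 2).choose (r - 1) : ℂ) / ((r : ℂ) * 2 ^ (2 * r - 1)))) := by
  have hA : A r = -(((2 * r - 2).choose (r - 1) : ℚ) / ((r : ℚ) * 2 ^ (2 * r - 1))) := by
    show (if r = 0 then (1:ℚ) else _) = _
    rw [if_neg (by omega)]
  have h1 : (∑ c ∈ WT r r,
        (-(1 : ℚ) / 2) ^ (∑ i, c i) /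
          (∏ i : Fin r, ((((i : ℕ) + 1 : ℕ) : ℚ) ^ c i * ((c i).factorial : ℚ))))
      = S r r := by
    rw [S]
    refine Finset.sum_congr rfl fun c _ => ?_
    simp only [g, Finset.prod_div_distrib, Finset.prod_pow_eq_pow_sum]
  have hmain : (∑ c ∈ WT r r,
        (-(1 : ℚ) / 2) ^ (∑ i, c i) /
          (∏ i : Fin r, ((((i : ℕ) + 1 : ℕ) : ℚ) ^ c i * ((c i).factorial : ℚ))))
      = -(((2 * r - 2).choose (r - 1) : ℚ) / ((r : ℚ) * 2 ^ (2 * r - 1))) := by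
    rw [h1, S_eq, hA]
  refine ⟨hmain, ?_⟩
  have hz : ∀ i : Fin r, riemannZeta ((((i : ℕ) + 1 : ℕ) : ℂ) * 0) = -1 / 2 := by
    intro i
    rw [mul_zero, riemannZeta_zero]
  have hcast : (∑ c ∈ WT r r,
        1 / (∏ i : Fin r, ((((i : ℕ) + 1 : ℕ) : ℂ) ^ c i * ((c i).factorial : ℂ))) *
        ∏ i : Fin r, riemannZeta ((((i : ℕ) + 1 : ℕ) : ℂ) * 0) ^ c i)
      = ((∑ c ∈ WT r r,
        (-(1 : ℚ) / 2) ^ (∑ i, c i) /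
          (∏ i : Fin r, ((((i : ℕ) + 1 : ℕ) : ℚ) ^ c i * ((c i).factorial : ℚ))) : ℚ) : ℂ) := by
    rw [Rat.cast_sum]
    refine Finset.sum_congr rfl fun c _ => ?_
    simp only [hz]
    rw [Finset.prod_pow_eq_pow_sum]
    push_cast
    ring
  rw [hcast, hmain]
  push_cast
  ring_nf

end Aux

/-- For `r ≥ 1`:
`∑_{c₁+2c₂+⋯+rc_r=r} (−1/2)^{c₁+⋯+c_r}/(1^{c₁}c₁!⋯r^{c_r}c_r!) = −C(2r−2,r−1)/(r·2^{2r−1})`.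
Equivalently (substituting the continued value `ζ(0) = −1/2` for every factor `ζ(i·0)`
in the explicit formula for `ζ_r⋆(s)`), the meromorphically continued value `ζ_r⋆(0)`
equals `−C(2r−2,r−1)/(r·2^{2r−1})`. -/
theorem multZetaStar_at_zero (r : ℕ) (hr : 1 ≤ r) :
    (∑ c ∈ weightedTuples r,
        (-(1 : ℚ) / 2) ^ (∑ i, c i) /
          (∏ i : Fin r, ((((i : ℕ) + 1 : ℕ) : ℚ) ^ c i * ((c i).factorial : ℚ)))
      = -(((2 * r - 2).choose (r - 1) : ℚ) / ((r : ℚ) * 2 ^ (2 * r - 1)))) ∧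
    (∑ c ∈ weightedTuples r,
        1 / (∏ i : Fin r, ((((i : ℕ) + 1 : ℕ) : ℂ) ^ c i * ((c i).factorial : ℂ))) *
        ∏ i : Fin r, riemannZeta ((((i : ℕ) + 1 : ℕ) : ℂ) * 0) ^ c i
      = -(((2 * r - 2).choose (r - 1) : ℂ) / ((r : ℂ) * 2 ^ (2 * r - 1)))) := by
  rw [show weightedTuples r = WT r r from rfl]
  exact multZetaStar_at_zero' r hr
end

section
/- For every integer r ≥ 1, the multiple zeta value at identical argument 2 satisfies ζ_r(2) = ∑_{n₁ > n₂ > ⋯ > n_r > 0} (n₁ n₂ ⋯ n_r)^{-2} = π^{2r} / (2r+1)!. -/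
open Filter Finset Real Topology

noncomputable section MZV

namespace MZVaux

/-- weight function -/
def a (n : ℕ+) : ℝ := (((n : ℕ) : ℝ) ^ 2)⁻¹

lemma a_nonneg (n : ℕ+) : 0 ≤ a n := by unfold a; positivity

/-- finite index sets -/
def u (N : ℕ) : Finset ℕ+ := (Finset.range N).map ⟨Nat.succPNat, Nat.succPNat_injective⟩

lemma u_mono : Monotone u := fun M N h => Finset.map_subset_map.2 (Finset.range_subset_range.2 h)

lemma mem_u {n : ℕ+} {N : ℕ} : n ∈ u N ↔ (n : ℕ) ≤ N := by
  simp only [u, Finset.mem_map, Finset.mem_range, Function.Embedding.coeFn_mk]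
  constructor
  · rintro ⟨j, hj, rfl⟩
    simpa [Nat.succPNat] using hj
  · intro h
    have hn1 : 1 ≤ (n : ℕ) := n.one_le
    refine ⟨(n : ℕ) - 1, by omega, ?_⟩
    apply PNat.coe_injective
    simp [Nat.succPNat]
    omega

lemma card_u (N : ℕ) : (u N).card = N := by simp [u]

lemma subset_u (s : Finset ℕ+) : s ⊆ u (s.sup (fun n => (n : ℕ))) := by
  intro n hn
  exact mem_u.2 (Finset.le_sup (f := fun n : ℕ+ => (n : ℕ)) hn)

lemma sum_a_u (N : ℕ) : ∑ n ∈ u N, a n ≤ 2 := by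
  have key : ∀ M : ℕ, ∑ j ∈ Finset.range (M + 1), (((j : ℝ) + 1) ^ 2)⁻¹ ≤ 2 - ((M : ℝ) + 1)⁻¹ := by
    intro M
    induction M with
    | zero => norm_num
    | succ M ih =>
      rw [Finset.sum_range_succ]
      have h1 : (0 : ℝ) < (M : ℝ) + 1 := by positivity
      have h2 : (0 : ℝ) < (M : ℝ) + 2 := by positivity
      have hinv : (((M : ℝ) + 1 + 1) ^ 2)⁻¹ ≤ ((M : ℝ) + 1)⁻¹ - ((M : ℝ) + 2)⁻¹ := by
        have e : ((M : ℝ) + 1)⁻¹ - ((M : ℝ) + 2)⁻¹ = (((M : ℝ) + 1) * ((M : ℝ) + 2))⁻¹ := by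
          field_simp
          ring
        rw [e]
        apply inv_anti₀ (by positivity)
        nlinarith
      push_cast
      have e2 : ((M : ℝ) + 1 + 1) = (M : ℝ) + 2 := by ring
      rw [e2] at hinv ⊢
      linarith [ih, hinv]
  have : ∑ n ∈ u N, a n = ∑ j ∈ Finset.range N, (((j : ℝ) + 1) ^ 2)⁻¹ := by
    rw [u, Finset.sum_map]
    refine Finset.sum_congr rfl fun j _ => ?_
    simp [a, Nat.succPNat]
  rw [this]
  cases N with
  | zero => simp
  | succ M =>
      calc ∑ j ∈ Finset.range (M + 1), (((j : ℝ) + 1) ^ 2)⁻¹ ≤ 2 - ((M : ℝ) + 1)⁻¹ := key M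
        _ ≤ 2 := by
            have h1 : (0:ℝ) < (M : ℝ) + 1 := by positivity
            have := inv_nonneg.2 h1.le
            linarith


/-- elementary symmetric sums of `a` over `u N` -/
def e (r N : ℕ) : ℝ := ∑ s ∈ (u N).powersetCard r, ∏ n ∈ s, a n

lemma e_nonneg (r N : ℕ) : 0 ≤ e r N :=
  Finset.sum_nonneg fun s _ => Finset.prod_nonneg fun n _ => a_nonneg n

lemma e_eq_zero {r N : ℕ} (h : N < r) : e r N = 0 := by
  unfold e
  rw [Finset.powersetCard_eq_empty.2 (by rw [card_u]; exact h)]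
  simp

/-- expansion of the product: key polynomial identity -/
lemma prod_expand (y : ℝ) (N : ℕ) :
    ∏ n ∈ u N, (1 + y * a n) = ∑ r ∈ Finset.range (N + 1), e r N * y ^ r := by
  have h1 : ∏ n ∈ u N, (y * a n + 1) = ∑ t ∈ (u N).powerset, ∏ n ∈ t, (y * a n) := by
    rw [Finset.prod_add]
    refine Finset.sum_congr rfl fun t _ => ?_
    simp
  have h2 : ∏ n ∈ u N, (1 + y * a n) = ∏ n ∈ u N, (y * a n + 1) := by
    refine Finset.prod_congr rfl fun n _ => by ring
  rw [h2, h1, Finset.sum_powerset, card_u]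
  refine Finset.sum_congr rfl fun r _ => ?_
  unfold e
  rw [Finset.sum_mul]
  refine Finset.sum_congr rfl fun t ht => ?_
  have hc : t.card = r := (Finset.mem_powersetCard.mp ht).2
  rw [Finset.prod_mul_distrib, Finset.prod_const, hc, mul_comm]

lemma e_le (r N : ℕ) : e r N ≤ Real.exp 2 := by
  have h1 : e r N ≤ ∑ t ∈ (u N).powerset, ∏ n ∈ t, a n := by
    apply Finset.sum_le_sum_of_subset_of_nonneg
    · intro t ht
      exact Finset.mem_powerset.2 (Finset.mem_powersetCard.mp ht).1
    · intro t _ _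
      exact Finset.prod_nonneg fun n _ => a_nonneg n
  have h2 : ∑ t ∈ (u N).powerset, ∏ n ∈ t, a n = ∏ n ∈ u N, (a n + 1) := by
    rw [Finset.prod_add]
    exact (Finset.sum_congr rfl fun t _ => by simp).symm
  have h3 : ∏ n ∈ u N, (a n + 1) ≤ ∏ n ∈ u N, Real.exp (a n) := by
    apply Finset.prod_le_prod
    · intro n _
      have := a_nonneg n
      linarith
    · intro n _
      have := Real.add_one_le_exp (a n)
      linarith
  have h4 : ∏ n ∈ u N, Real.exp (a n) = Real.exp (∑ n ∈ u N, a n) := by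
    rw [Real.exp_sum]
  have h5 : Real.exp (∑ n ∈ u N, a n) ≤ Real.exp 2 := Real.exp_le_exp.2 (sum_a_u N)
  calc e r N ≤ _ := h1
    _ = _ := h2
    _ ≤ _ := h3
    _ = _ := h4
    _ ≤ _ := h5

/-- the summand over `r`-element subsets -/
def g (r : ℕ) (s : {s : Finset ℕ+ // s.card = r}) : ℝ := ∏ n ∈ s.1, a n

lemma g_nonneg (r : ℕ) (s : {s : Finset ℕ+ // s.card = r}) : 0 ≤ g r s :=
  Finset.prod_nonneg fun n _ => a_nonneg n

lemma sum_g_le (r : ℕ) (T : Finset {s : Finset ℕ+ // s.card = r}) :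
    ∑ s ∈ T, g r s ≤ Real.exp 2 := by
  set N : ℕ := T.sup (fun s => s.1.sup (fun n => (n : ℕ))) with hN
  have hsub : ∀ s ∈ T, s.1 ∈ (u N).powersetCard r := by
    intro s hs
    refine Finset.mem_powersetCard.2 ⟨?_, s.2⟩
    refine (subset_u s.1).trans (u_mono ?_)
    exact Finset.le_sup (f := fun s : {s : Finset ℕ+ // s.card = r} =>
      s.1.sup (fun n => (n : ℕ))) hs
  have hinj : Set.InjOn Subtype.val (T : Set {s : Finset ℕ+ // s.card = r}) :=
    Subtype.val_injective.injOn
  have h1 : ∑ s ∈ T, g r s = ∑ t ∈ T.image Subtype.val, ∏ n ∈ t, a n := by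
    rw [Finset.sum_image (fun x _ y _ h => Subtype.val_injective h)]
    rfl
  rw [h1]
  have h2 : ∑ t ∈ T.image Subtype.val, ∏ n ∈ t, a n ≤ e r N := by
    apply Finset.sum_le_sum_of_subset_of_nonneg
    · intro t ht
      obtain ⟨s, hs, rfl⟩ := Finset.mem_image.mp ht
      exact hsub s hs
    · intro t _ _
      exact Finset.prod_nonneg fun n _ => a_nonneg n
  exact h2.trans (e_le r N)

lemma summable_g (r : ℕ) : Summable (g r) :=
  summable_of_sum_le (g_nonneg r) (sum_g_le r)

/-- the multiple zeta value building block -/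
def SS (r : ℕ) : ℝ := ∑' s : {s : Finset ℕ+ // s.card = r}, g r s

lemma SS_nonneg (r : ℕ) : 0 ≤ SS r := tsum_nonneg (g_nonneg r)

lemma SS_le (r : ℕ) : SS r ≤ Real.exp 2 :=
  Summable.tsum_le_of_sum_le (summable_g r) (sum_g_le r)

lemma SS_zero : SS 0 = 1 := by
  unfold SS
  rw [tsum_eq_single (⟨∅, rfl⟩ : {s : Finset ℕ+ // s.card = 0})]
  · simp [g]
  · intro s hs
    exfalso
    exact hs (Subtype.ext (Finset.card_eq_zero.mp s.2))


/-- finite approximating families of subsets -/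
def phi (r N : ℕ) : Finset {s : Finset ℕ+ // s.card = r} :=
  ((u N).powerset).subtype (fun s => s.card = r)

lemma phi_mono (r : ℕ) : Monotone (phi r) := fun M N h =>
  Finset.subtype_mono (Finset.powerset_mono.2 (u_mono h))

lemma phi_exhausts (r : ℕ) (s : {s : Finset ℕ+ // s.card = r}) :
    ∃ N, s ∈ phi r N := by
  refine ⟨s.1.sup (fun n => (n : ℕ)), ?_⟩
  simp only [phi, Finset.mem_subtype, Finset.mem_powerset]
  exact subset_u s.1

lemma sum_phi (r N : ℕ) : ∑ s ∈ phi r N, g r s = e r N := by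
  unfold phi e g
  rw [Finset.sum_subtype_eq_sum_filter (s := (u N).powerset)
    (p := fun s => s.card = r) (f := fun t => ∏ n ∈ t, a n)]
  rw [← Finset.powersetCard_eq_filter]

lemma tendsto_e (r : ℕ) : Tendsto (fun N => e r N) atTop (𝓝 (SS r)) := by
  have hs : HasSum (g r) (SS r) := (summable_g r).hasSum
  have h1 : Tendsto (phi r) atTop atTop :=
    tendsto_atTop_finset_of_monotone (phi_mono r) (phi_exhausts r)
  have h2 := (hs.comp h1)
  simpa only [Function.comp_def, sum_phi] using h2

lemma tendsto_prod_tsum {x : ℝ} (hx : |x| < 1) :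
    Tendsto (fun N => ∏ n ∈ u N, (1 + (-(x ^ 2)) * a n)) atTop
      (𝓝 (∑' r : ℕ, SS r * (-(x ^ 2)) ^ r)) := by
  have hb : Summable (fun r : ℕ => Real.exp 2 * |x| ^ (2 * r)) := by
    have h1 : Summable (fun r : ℕ => (|x| ^ 2) ^ r) := by
      apply summable_geometric_of_lt_one (by positivity)
      calc |x| ^ 2 ≤ |x| * 1 := by nlinarith [abs_nonneg x]
        _ < 1 := by nlinarith [abs_nonneg x]
    simpa [pow_mul] using h1.mul_left (Real.exp 2)
  have key : Tendsto (fun N => ∑' r : ℕ, e r N * (-(x ^ 2)) ^ r) atTop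
      (𝓝 (∑' r : ℕ, SS r * (-(x ^ 2)) ^ r)) := by
    apply tendsto_tsum_of_dominated_convergence
      (bound := fun r : ℕ => Real.exp 2 * |x| ^ (2 * r)) hb
    · intro r
      exact (tendsto_e r).mul_const _
    · filter_upwards with N r
      have h1 : |e r N * (-(x ^ 2)) ^ r| = e r N * (x ^ 2) ^ r := by
        rw [abs_mul, abs_of_nonneg (e_nonneg r N), abs_pow, abs_neg, abs_of_nonneg (by positivity)]
      rw [Real.norm_eq_abs, h1, pow_mul, ← sq_abs]
      exact mul_le_mul (e_le r N) le_rfl (by positivity) (Real.exp_pos 2).le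
  have heq : ∀ N, ∑' r : ℕ, e r N * (-(x ^ 2)) ^ r
      = ∏ n ∈ u N, (1 + (-(x ^ 2)) * a n) := by
    intro N
    rw [prod_expand]
    apply tsum_eq_sum
    intro r hr
    rw [e_eq_zero (by simpa using hr), zero_mul]
  exact Tendsto.congr heq key


lemma summable_bound {x : ℝ} (hx : |x| < 1) :
    Summable (fun r : ℕ => Real.exp 2 * |x| ^ (2 * r)) := by
  have h1 : Summable (fun r : ℕ => (|x| ^ 2) ^ r) := by
    apply summable_geometric_of_lt_one (by positivity)
    calc |x| ^ 2 ≤ |x| * 1 := by nlinarith [abs_nonneg x]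
      _ < 1 := by nlinarith [abs_nonneg x]
  simpa [pow_mul] using h1.mul_left (Real.exp 2)

/-- the generating function of the `SS r` -/
def G (x : ℝ) : ℝ := ∑' r : ℕ, SS r * (-(x ^ 2)) ^ r

lemma summable_G {x : ℝ} (hx : |x| < 1) :
    Summable (fun r : ℕ => SS r * (-(x ^ 2)) ^ r) := by
  apply Summable.of_norm_bounded (summable_bound hx)
  intro r
  rw [Real.norm_eq_abs, abs_mul, abs_of_nonneg (SS_nonneg r), abs_pow, abs_neg,
    abs_of_nonneg (sq_nonneg x), pow_mul, ← sq_abs]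
  exact mul_le_mul (SS_le r) le_rfl (by positivity) (Real.exp_pos 2).le

lemma hasSum_G {x : ℝ} (hx : |x| < 1) :
    HasSum (fun r : ℕ => SS r * (-(x ^ 2)) ^ r) (G x) := (summable_G hx).hasSum

lemma prod_eq_range (x : ℝ) (N : ℕ) :
    ∏ n ∈ u N, (1 + (-(x ^ 2)) * a n)
      = ∏ j ∈ Finset.range N, (1 - x ^ 2 / ((j : ℝ) + 1) ^ 2) := by
  rw [u, Finset.prod_map]
  refine Finset.prod_congr rfl fun j _ => ?_
  simp only [Function.Embedding.coeFn_mk, a, Nat.succPNat, PNat.mk_ofNat, PNat.mk_coe]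
  push_cast
  rw [div_eq_mul_inv]
  ring

lemma G_eq_sin {x : ℝ} (hx : |x| < 1) : Real.pi * x * G x = Real.sin (Real.pi * x) := by
  have h1 : Tendsto (fun N : ℕ => Real.pi * x * ∏ n ∈ u N, (1 + (-(x ^ 2)) * a n))
      atTop (𝓝 (Real.pi * x * G x)) :=
    tendsto_const_nhds.mul (tendsto_prod_tsum hx)
  have h2 := Real.tendsto_euler_sin_prod x
  have h3 : Tendsto (fun N : ℕ => Real.pi * x * ∏ n ∈ u N, (1 + (-(x ^ 2)) * a n))
      atTop (𝓝 (Real.sin (Real.pi * x))) := by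
    refine h2.congr fun N => ?_
    rw [prod_eq_range]
  exact tendsto_nhds_unique h1 h3

lemma hasSum_sin_side {x : ℝ} (hx : |x| < 1) :
    HasSum (fun n : ℕ => ((-1 : ℝ) ^ n * Real.pi ^ (2 * n) / ((2 * n + 1).factorial : ℝ))
      * x ^ (2 * n)) (G x) := by
  rcases eq_or_ne x 0 with rfl | hx0
  · have hG0 : G 0 = 1 := by
      unfold G
      rw [tsum_eq_single 0]
      · simp [SS_zero]
      · intro r hr
        rw [show (-(((0:ℝ)) ^ 2)) = 0 by norm_num, zero_pow hr, mul_zero]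
    rw [hG0]
    have := hasSum_single (f := fun n : ℕ =>
      ((-1 : ℝ) ^ n * Real.pi ^ (2 * n) / ((2 * n + 1).factorial : ℝ)) * (0:ℝ) ^ (2 * n)) 0
      (by intro b hb; simp [pow_eq_zero_iff, mul_ne_zero, hb])
    simpa using this
  · have hπx : Real.pi * x ≠ 0 := mul_ne_zero Real.pi_ne_zero hx0
    have hG : G x = Real.sin (Real.pi * x) / (Real.pi * x) := by
      rw [← G_eq_sin hx, mul_comm, mul_div_assoc, div_self hπx, mul_one]
    rw [hG]
    have h := (Real.hasSum_sin (Real.pi * x)).div_const (Real.pi * x)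
    have heq : (fun n : ℕ => ((-1 : ℝ) ^ n * Real.pi ^ (2 * n) / ((2 * n + 1).factorial : ℝ))
        * x ^ (2 * n))
        = fun n : ℕ => (-1 : ℝ) ^ n * (Real.pi * x) ^ (2 * n + 1)
          / ((2 * n + 1).factorial : ℝ) / (Real.pi * x) := by
      funext n
      rw [pow_succ, mul_pow]
      have hfac : ((2 * n + 1).factorial : ℝ) ≠ 0 := by
        exact_mod_cast (2 * n + 1).factorial_ne_zero
      field_simp
    rw [heq]
    exact h


/-- coefficients of the two power series -/
def c2 (k : ℕ) : ℝ := if Even k then (-1 : ℝ) ^ (k / 2) * SS (k / 2) else 0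

def d2 (k : ℕ) : ℝ :=
  if Even k then (-1 : ℝ) ^ (k / 2) * (Real.pi ^ k / ((k + 1).factorial : ℝ)) else 0

lemma not_even_c2 {k : ℕ} (h : ¬ Even k) : c2 k = 0 := if_neg h
lemma not_even_d2 {k : ℕ} (h : ¬ Even k) : d2 k = 0 := if_neg h

lemma c2_two_mul (n : ℕ) : c2 (2 * n) = (-1 : ℝ) ^ n * SS n := by
  unfold c2
  rw [if_pos ⟨n, (two_mul n)⟩, Nat.mul_div_cancel_left n two_pos]

lemma d2_two_mul (n : ℕ) :
    d2 (2 * n) = (-1 : ℝ) ^ n * (Real.pi ^ (2 * n) / (((2 * n) + 1).factorial : ℝ)) := by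
  unfold d2
  rw [if_pos ⟨n, (two_mul n)⟩, Nat.mul_div_cancel_left n two_pos]

lemma mem_ball_iff {y : ℝ} : y ∈ Metric.eball (0 : ℝ) ((1/2 : NNReal) : ENNReal) ↔ |y| < 1/2 := by
  rw [Metric.eball_coe, Metric.mem_ball, dist_zero_right, Real.norm_eq_abs]
  norm_num

lemma norm_ofScalars_c2 (n : ℕ) : ‖FormalMultilinearSeries.ofScalars ℝ c2 n‖ = |c2 n| := by
  have : FormalMultilinearSeries.ofScalars ℝ c2 n
      = c2 n • ContinuousMultilinearMap.mkPiAlgebraFin ℝ n ℝ := rfl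
  rw [this, norm_smul (c2 n) (ContinuousMultilinearMap.mkPiAlgebraFin ℝ n ℝ),
    ContinuousMultilinearMap.norm_mkPiAlgebraFin, mul_one, Real.norm_eq_abs]

lemma norm_ofScalars_d2 (n : ℕ) : ‖FormalMultilinearSeries.ofScalars ℝ d2 n‖ = |d2 n| := by
  have : FormalMultilinearSeries.ofScalars ℝ d2 n
      = d2 n • ContinuousMultilinearMap.mkPiAlgebraFin ℝ n ℝ := rfl
  rw [this, norm_smul (d2 n) (ContinuousMultilinearMap.mkPiAlgebraFin ℝ n ℝ),
    ContinuousMultilinearMap.norm_mkPiAlgebraFin, mul_one, Real.norm_eq_abs]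

lemma hasSum_even_of {f : ℕ → ℝ} {L : ℝ} (h0 : ∀ k, ¬ Even k → f k = 0)
    (h : HasSum (fun n : ℕ => f (2 * n)) L) : HasSum f L := by
  have hinj : Function.Injective (fun n : ℕ => 2 * n) := fun m n h => by
    simp only at h; omega
  refine (Function.Injective.hasSum_iff hinj ?_).mp h
  intro k hk
  refine h0 k fun he => ?_
  obtain ⟨m, hm⟩ := he
  refine hk ⟨m, ?_⟩
  simp only
  omega

lemma hasFPS_c2 : HasFPowerSeriesOnBall G (FormalMultilinearSeries.ofScalars ℝ c2) 0
    ((1/2 : NNReal) : ENNReal) where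
  r_le := by
    apply FormalMultilinearSeries.le_radius_of_bound _ (Real.exp 2)
    intro n
    rw [norm_ofScalars_c2]
    have h1 : |c2 n| ≤ Real.exp 2 := by
      unfold c2
      split
      · rw [abs_mul, abs_pow, abs_neg, abs_one, one_pow, one_mul,
          abs_of_nonneg (SS_nonneg _)]
        exact SS_le _
      · simpa using (Real.exp_pos 2).le
    have h2 : ((1/2 : NNReal) : ℝ) ^ n ≤ 1 := by
      apply pow_le_one₀ <;> norm_num
    calc |c2 n| * ((1/2 : NNReal) : ℝ) ^ n ≤ Real.exp 2 * 1 :=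
          mul_le_mul h1 h2 (by positivity) (Real.exp_pos 2).le
      _ = Real.exp 2 := mul_one _
  r_pos := by norm_num
  hasSum := by
    intro y hy
    have hy' : |y| < 1/2 := mem_ball_iff.mp hy
    have hy1 : |y| < 1 := hy'.trans (by norm_num)
    rw [zero_add]
    refine hasSum_even_of (fun k hk => by
      rw [FormalMultilinearSeries.ofScalars_apply_eq, not_even_c2 hk, zero_smul]) ?_
    have heq : (fun n : ℕ => (FormalMultilinearSeries.ofScalars ℝ c2 (2 * n)) (fun _ => y))
        = fun n : ℕ => SS n * (-(y ^ 2)) ^ n := by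
      funext n
      rw [FormalMultilinearSeries.ofScalars_apply_eq, c2_two_mul, smul_eq_mul,
        show (-(y ^ 2)) = (-1) * y ^ 2 by ring, mul_pow, ← pow_mul]
      ring
    exact heq ▸ hasSum_G hy1

lemma hasFPS_d2 : HasFPowerSeriesOnBall G (FormalMultilinearSeries.ofScalars ℝ d2) 0
    ((1/2 : NNReal) : ENNReal) where
  r_le := by
    apply FormalMultilinearSeries.le_radius_of_summable
    have hbig : Summable (fun n : ℕ => (Real.pi / 2) ^ n / (n.factorial : ℝ)) :=
      Real.summable_pow_div_factorial (Real.pi / 2)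
    apply Summable.of_nonneg_of_le _ _ hbig
    · intro n
      positivity
    intro n
    rw [norm_ofScalars_d2]
    have h1 : |d2 n| ≤ Real.pi ^ n / (n.factorial : ℝ) := by
      unfold d2
      split
      · rw [abs_mul, abs_pow, abs_neg, abs_one, one_pow, one_mul,
          abs_of_nonneg (by positivity)]
        apply div_le_div_of_nonneg_left (by positivity) (by positivity)
        exact_mod_cast Nat.factorial_le (Nat.le_succ n)
      · simp only [abs_zero]
        positivity
    have h2 : ((1/2 : NNReal) : ℝ) = 1/2 := by norm_num
    calc |d2 n| * ((1/2 : NNReal) : ℝ) ^ n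
        ≤ (Real.pi ^ n / (n.factorial : ℝ)) * (1/2) ^ n := by
          rw [h2]
          apply mul_le_mul h1 le_rfl (by positivity) (by positivity)
      _ = (Real.pi / 2) ^ n / (n.factorial : ℝ) := by
          rw [div_pow Real.pi]
          simp only [one_div, inv_pow]
          ring
  r_pos := by norm_num
  hasSum := by
    intro y hy
    have hy' : |y| < 1/2 := mem_ball_iff.mp hy
    have hy1 : |y| < 1 := hy'.trans (by norm_num)
    rw [zero_add]
    refine hasSum_even_of (fun k hk => by
      rw [FormalMultilinearSeries.ofScalars_apply_eq, not_even_d2 hk, zero_smul]) ?_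
    have heq : (fun n : ℕ => (FormalMultilinearSeries.ofScalars ℝ d2 (2 * n)) (fun _ => y))
        = fun n : ℕ => ((-1 : ℝ) ^ n * Real.pi ^ (2 * n) / ((2 * n + 1).factorial : ℝ))
          * y ^ (2 * n) := by
      funext n
      rw [FormalMultilinearSeries.ofScalars_apply_eq, d2_two_mul, smul_eq_mul]
      ring
    exact heq ▸ hasSum_sin_side hy1

lemma SS_eq (r : ℕ) : SS r = Real.pi ^ (2 * r) / (((2 * r) + 1).factorial : ℝ) := by
  have h := (hasFPS_c2.hasFPowerSeriesAt).eq_formalMultilinearSeries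
    (hasFPS_d2.hasFPowerSeriesAt)
  have hcd : c2 = d2 := by
    rwa [FormalMultilinearSeries.ofScalars_series_eq_iff] at h
  have h2 := congrFun hcd (2 * r)
  rw [c2_two_mul, d2_two_mul] at h2
  have hne : ((-1 : ℝ) ^ r) ≠ 0 := pow_ne_zero _ (by norm_num)
  exact mul_left_cancel₀ hne h2

/-- the equivalence between `r`-subsets and strictly decreasing tuples -/
def eqv (r : ℕ) : {s : Finset ℕ+ // s.card = r} ≃ {f : Fin r → ℕ+ // StrictAnti f} where
  toFun s := ⟨fun i => s.1.orderEmbOfFin s.2 i.rev, by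
    intro i j hij
    exact (s.1.orderEmbOfFin s.2).strictMono (Fin.rev_lt_rev.mpr hij)⟩
  invFun f := ⟨Finset.univ.image f.1, by
    rw [Finset.card_image_of_injective _ f.2.injective, Finset.card_univ, Fintype.card_fin]⟩
  left_inv s := by
    apply Subtype.ext
    apply Finset.eq_of_subset_of_card_le
    · intro n hn
      obtain ⟨i, _, rfl⟩ := Finset.mem_image.mp hn
      exact Finset.orderEmbOfFin_mem s.1 s.2 _
    · rw [Finset.card_image_of_injective, Finset.card_univ, Fintype.card_fin, s.2]
      intro i j hij
      have := (s.1.orderEmbOfFin s.2).injective hij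
      exact Fin.rev_injective this
  right_inv f := by
    apply Subtype.ext
    funext i
    have hfs : ∀ x : Fin r, f.1 x.rev ∈ Finset.univ.image f.1 :=
      fun x => Finset.mem_image.2 ⟨x.rev, Finset.mem_univ _, rfl⟩
    have hmono : StrictMono (fun x : Fin r => f.1 x.rev) := by
      intro x y hxy
      exact f.2 (Fin.rev_lt_rev.mpr hxy)
    have h := Finset.orderEmbOfFin_unique
      (f := fun x : Fin r => f.1 x.rev)
      (by rw [Finset.card_image_of_injective _ f.2.injective, Finset.card_univ,
        Fintype.card_fin]) hfs hmono
    have h2 := congrFun h i.rev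
    simp only [Fin.rev_rev] at h2
    exact h2.symm

lemma tsum_strictAnti_eq (r : ℕ) :
    (∑' f : {f : Fin r → ℕ+ // StrictAnti f}, ∏ i, (((f.1 i : ℕ) : ℝ) ^ 2)⁻¹) = SS r := by
  rw [← Equiv.tsum_eq (eqv r) (fun f => ∏ i, (((f.1 i : ℕ) : ℝ) ^ 2)⁻¹)]
  unfold SS g
  refine tsum_congr fun s => ?_
  show (∏ i : Fin r, a ((s.1.orderEmbOfFin s.2) i.rev)) = ∏ n ∈ s.1, a n
  calc (∏ i : Fin r, a ((s.1.orderEmbOfFin s.2) i.rev))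
      = ∏ i : Fin r, a (s.1.orderEmbOfFin s.2 i) :=
        Fintype.prod_equiv Fin.revPerm _ _ (fun i => rfl)
    _ = ∏ n ∈ s.1, a n := by
        rw [← Finset.prod_coe_sort s.1 a]
        exact Fintype.prod_equiv (s.1.orderIsoOfFin s.2).toEquiv _ _ (fun i => rfl)

end MZVaux

/-- For every `r ≥ 1`:
`ζ_r(2) = ∑_{n₁ > ⋯ > n_r > 0} (n₁⋯n_r)^{-2} = π^{2r}/(2r+1)!`. -/
theorem multZeta_at_two (r : ℕ) (hr : 1 ≤ r) :
    (∑' f : {f : Fin r → ℕ+ // StrictAnti f}, ∏ i, (((f.1 i : ℕ) : ℝ) ^ 2)⁻¹)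
      = Real.pi ^ (2 * r) / ((2 * r + 1).factorial : ℝ) := by
  rw [MZVaux.tsum_strictAnti_eq, MZVaux.SS_eq]

end MZV
end
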